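/- arXiv:1702.08239 — 3 statements merged into one kernel-verified Lean document; each statement's English description precedes it below -/
import Mathlib

section
/- Under the same assumptions (α ∈ (0,1), C_n → ∞, C_n^α/n → 0, W_{n,1},...,W_{n,n} i.i.d. with truncated BFRY density f_n), for every integer s ≥ 2, the ratio M_{s,n} = (∑_{i=1}^n W_{n,i}^s) / (∑_{i=1}^n W_{n,i})^s converges to 0 in probability as n → ∞. -/
open MeasureTheory ProbabilityTheory Real Set Filter
open scoped ENNReal NNReal

/-- The truncated BFRY distribution on `(0, Cn]` with discount parameter `α`. -/
noncomputable def truncBFRY (α Cn : ℝ) : Measure ℝ :=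
  volume.withDensity (fun w => ENNReal.ofReal
    (Set.indicator (Ioc (0:ℝ) Cn)
      (fun w => (∫ u in Ioc (0:ℝ) Cn, u ^ (-α - 1) * (1 - Real.exp (-u)))⁻¹ *
        w ^ (-α - 1) * (1 - Real.exp (-w))) w))

noncomputable def zC (α C : ℝ) : ℝ := ∫ u in Ioc (0:ℝ) C, u ^ (-α - 1) * (1 - Real.exp (-u))

lemma meas_ker (r : ℝ) : Measurable (fun u : ℝ => u ^ r * (1 - Real.exp (-u))) := by
  fun_prop

lemma one_sub_exp_nonneg {u : ℝ} (hu : 0 ≤ u) : 0 ≤ 1 - Real.exp (-u) := by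
  nlinarith [Real.exp_le_one_iff.2 (neg_nonpos.2 hu)]

lemma one_sub_exp_le {u : ℝ} : 1 - Real.exp (-u) ≤ u := by
  nlinarith [Real.add_one_le_exp (-u)]

lemma intOn_rpow (r : ℝ) (hr : -1 < r) (C : ℝ) :
    IntegrableOn (fun u : ℝ => u ^ r) (Ioc 0 C) :=
  (intervalIntegral.intervalIntegrable_rpow' hr).1

lemma intOn_ker (r : ℝ) (hr : -1 < r) (C : ℝ) :
    IntegrableOn (fun u : ℝ => u ^ r * (1 - Real.exp (-u))) (Ioc 0 C) := by
  refine Integrable.mono (intOn_rpow r hr C) (meas_ker r).aestronglyMeasurable.restrict ?_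
  filter_upwards [ae_restrict_mem measurableSet_Ioc] with u hu
  have h1 : 0 ≤ 1 - Real.exp (-u) := one_sub_exp_nonneg hu.1.le
  have h2 : 1 - Real.exp (-u) ≤ 1 := by nlinarith [Real.exp_pos (-u)]
  have h3 : (0:ℝ) ≤ u ^ r := Real.rpow_nonneg hu.1.le r
  rw [Real.norm_eq_abs, Real.norm_eq_abs, abs_of_nonneg (mul_nonneg h3 h1), abs_of_nonneg h3]
  nlinarith

lemma intOn_ker0 {α : ℝ} (hα1 : α < 1) (C : ℝ) :
    IntegrableOn (fun u : ℝ => u ^ (-α - 1) * (1 - Real.exp (-u))) (Ioc 0 C) := by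
  refine Integrable.mono (intOn_rpow (-α) (by linarith) C) (meas_ker _).aestronglyMeasurable.restrict ?_
  filter_upwards [ae_restrict_mem measurableSet_Ioc] with u hu
  have h1 : 0 ≤ 1 - Real.exp (-u) := one_sub_exp_nonneg hu.1.le
  have h3 : (0:ℝ) ≤ u ^ (-α - 1) := Real.rpow_nonneg hu.1.le _
  have h4 : (0:ℝ) ≤ u ^ (-α) := Real.rpow_nonneg hu.1.le _
  rw [Real.norm_eq_abs, Real.norm_eq_abs, abs_of_nonneg (mul_nonneg h3 h1), abs_of_nonneg h4]
  calc u ^ (-α - 1) * (1 - Real.exp (-u)) ≤ u ^ (-α - 1) * u :=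
        mul_le_mul_of_nonneg_left one_sub_exp_le h3
    _ = u ^ (-α) := by
        rw [← Real.rpow_add_one hu.1.ne' (-α - 1)]; ring_nf

lemma zC_pos {α : ℝ} (hα1 : α < 1) {C : ℝ} (hC : 0 < C) : 0 < zC α C := by
  rw [zC, setIntegral_pos_iff_support_of_nonneg_ae]
  · have : (Ioc (0:ℝ) C) ⊆ Function.support (fun u : ℝ => u ^ (-α - 1) * (1 - Real.exp (-u))) ∩ Ioc 0 C := by
      intro u hu
      refine ⟨?_, hu⟩
      have h1 : 0 < 1 - Real.exp (-u) := by nlinarith [Real.exp_lt_one_iff.2 (neg_neg_iff_pos.2 hu.1)]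
      have h3 : (0:ℝ) < u ^ (-α - 1) := Real.rpow_pos_of_pos hu.1 _
      exact (mul_pos h3 h1).ne'
    refine lt_of_lt_of_le ?_ (measure_mono this)
    simp [hC]
  · filter_upwards [ae_restrict_mem measurableSet_Ioc] with u hu
    exact mul_nonneg (Real.rpow_nonneg hu.1.le _) (one_sub_exp_nonneg hu.1.le)
  · exact intOn_ker0 hα1 C

lemma int_rpow_Ioc (r : ℝ) (hr : -1 < r) {a b : ℝ} (hab : a ≤ b) :
    ∫ u in Ioc a b, u ^ r = (b ^ (r + 1) - a ^ (r + 1)) / (r + 1) := by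
  rw [← intervalIntegral.integral_of_le hab, integral_rpow (Or.inl hr)]

lemma zC_le {α : ℝ} (hα0 : 0 < α) (hα1 : α < 1) {C : ℝ} (hC : 1 ≤ C) :
    zC α C ≤ (1 - α)⁻¹ + α⁻¹ := by
  have hsplit : Ioc (0:ℝ) C = Ioc 0 1 ∪ Ioc 1 C := (Set.Ioc_union_Ioc_eq_Ioc zero_le_one hC).symm
  have hdisj : Disjoint (Ioc (0:ℝ) 1) (Ioc (1:ℝ) C) := Set.Ioc_disjoint_Ioc_of_le le_rfl
  rw [zC, hsplit, setIntegral_union hdisj measurableSet_Ioc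
    ((intOn_ker0 hα1 C).mono_set (by rw [hsplit]; exact subset_union_left))
    ((intOn_ker0 hα1 C).mono_set (by rw [hsplit]; exact subset_union_right))]
  have h1 : ∫ u in Ioc (0:ℝ) 1, u ^ (-α - 1) * (1 - Real.exp (-u)) ≤ (1 - α)⁻¹ := by
    have hle : ∫ u in Ioc (0:ℝ) 1, u ^ (-α - 1) * (1 - Real.exp (-u))
        ≤ ∫ u in Ioc (0:ℝ) 1, u ^ (-α) := by
      refine setIntegral_mono_on
        ((intOn_ker0 hα1 C).mono_set (by rw [hsplit]; exact subset_union_left))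
        (intOn_rpow (-α) (by linarith) 1) measurableSet_Ioc ?_
      intro u hu
      calc u ^ (-α - 1) * (1 - Real.exp (-u)) ≤ u ^ (-α - 1) * u :=
            mul_le_mul_of_nonneg_left one_sub_exp_le (Real.rpow_nonneg hu.1.le _)
        _ = u ^ (-α) := by rw [← Real.rpow_add_one hu.1.ne' (-α - 1)]; ring_nf
    rw [int_rpow_Ioc (-α) (by linarith) zero_le_one] at hle
    rw [Real.one_rpow, Real.zero_rpow (by linarith)] at hle
    calc _ ≤ (1 - 0) / (-α + 1) := hle
      _ = (1 - α)⁻¹ := by rw [show -α + 1 = 1 - α by ring]; simp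
  have h2 : ∫ u in Ioc (1:ℝ) C, u ^ (-α - 1) * (1 - Real.exp (-u)) ≤ α⁻¹ := by
    have hle : ∫ u in Ioc (1:ℝ) C, u ^ (-α - 1) * (1 - Real.exp (-u))
        ≤ ∫ u in Ioc (1:ℝ) C, u ^ (-α - 1) := by
      refine setIntegral_mono_on
        ((intOn_ker0 hα1 C).mono_set (by rw [hsplit]; exact subset_union_right))
        ((intervalIntegral.intervalIntegrable_rpow (a := 1) (b := C) (μ := volume)
          (r := -α - 1) (Or.inr (by
            intro h
            rw [Set.mem_uIcc] at h
            rcases h with ⟨h, _⟩ | ⟨_, h⟩ <;> linarith))).1) measurableSet_Ioc ?_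
      intro u hu
      nlinarith [Real.exp_pos (-u), Real.rpow_nonneg (le_trans zero_le_one hu.1.le) (-α - 1)]
    have hval : ∫ u in Ioc (1:ℝ) C, u ^ (-α - 1) = (C ^ (-α) - 1) / (-α) := by
      rw [← intervalIntegral.integral_of_le hC,
        integral_rpow (Or.inr ⟨by intro h; apply hα0.ne'; linarith [h], by
          intro h; rw [Set.mem_uIcc] at h
          rcases h with ⟨h, _⟩ | ⟨_, h⟩ <;> linarith⟩)]
      norm_num
    rw [hval] at hle
    have hCnn : 0 ≤ C ^ (-α) := Real.rpow_nonneg (by linarith) _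
    calc _ ≤ (C ^ (-α) - 1) / (-α) := hle
      _ = (1 - C ^ (-α)) / α := by
            rw [div_eq_div_iff (by simpa using hα0.ne') (ne_of_gt hα0)]; ring
      _ ≤ α⁻¹ := by
            rw [div_le_iff₀ hα0, inv_mul_cancel₀ (ne_of_gt hα0)]
            linarith
  linarith

lemma truncBFRY_eq (α C : ℝ) : truncBFRY α C = volume.withDensity (fun w => ENNReal.ofReal
    (Set.indicator (Ioc (0:ℝ) C)
      (fun w => (zC α C)⁻¹ * w ^ (-α - 1) * (1 - Real.exp (-w))) w)) := rfl

lemma truncBFRY_compl (α C : ℝ) : truncBFRY α C ((Ioc (0:ℝ) C)ᶜ) = 0 := by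
  rw [truncBFRY_eq, withDensity_apply _ measurableSet_Ioc.compl]
  rw [setLIntegral_congr_fun measurableSet_Ioc.compl
    (fun w (hw : w ∉ Ioc (0:ℝ) C) => by
      rw [Set.indicator_of_notMem hw, ENNReal.ofReal_zero])]
  simp

lemma truncBFRY_integral {α : ℝ} (hα1 : α < 1) {C : ℝ} (hC : 0 < C) (g : ℝ → ℝ)
    (hg : Measurable g) :
    ∫ w, g w ∂(truncBFRY α C)
      = ∫ w in Ioc (0:ℝ) C, ((zC α C)⁻¹ * w ^ (-α - 1) * (1 - Real.exp (-w))) * g w := by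
  have hz : 0 ≤ (zC α C)⁻¹ := inv_nonneg.2 (zC_pos hα1 hC).le
  set d : ℝ → ℝ := fun w => (zC α C)⁻¹ * w ^ (-α - 1) * (1 - Real.exp (-w)) with hd
  have hdmeas : Measurable (Set.indicator (Ioc (0:ℝ) C) d) := by
    refine Measurable.indicator ?_ measurableSet_Ioc
    fun_prop
  have hnn : ∀ w, 0 ≤ Set.indicator (Ioc (0:ℝ) C) d w := by
    intro w
    by_cases hw : w ∈ Ioc (0:ℝ) C
    · rw [Set.indicator_of_mem hw]
      exact mul_nonneg (mul_nonneg hz (Real.rpow_nonneg hw.1.le _))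
        (one_sub_exp_nonneg hw.1.le)
    · rw [Set.indicator_of_notMem hw]
  have key := integral_withDensity_eq_integral_smul
    (μ := (volume : Measure ℝ))
    (f := fun w => (Set.indicator (Ioc (0:ℝ) C) d w).toNNReal)
    (hdmeas.real_toNNReal) g
  rw [truncBFRY_eq]
  have hcoe : (fun w => ((Set.indicator (Ioc (0:ℝ) C) d w).toNNReal : ℝ≥0∞))
      = fun w => ENNReal.ofReal (Set.indicator (Ioc (0:ℝ) C) d w) := rfl
  rw [← hcoe, key]
  have : (fun w => (Set.indicator (Ioc (0:ℝ) C) d w).toNNReal • g w)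
      = Set.indicator (Ioc (0:ℝ) C) (fun w => d w * g w) := by
    funext w
    rw [NNReal.smul_def, smul_eq_mul, Real.coe_toNNReal _ (hnn w)]
    by_cases hw : w ∈ Ioc (0:ℝ) C
    · rw [Set.indicator_of_mem hw, Set.indicator_of_mem hw]
    · rw [Set.indicator_of_notMem hw, Set.indicator_of_notMem hw, zero_mul]
  rw [this, integral_indicator measurableSet_Ioc]

noncomputable def c1 (α : ℝ) : ℝ := ((1 - α)⁻¹ + α⁻¹)⁻¹ * (1 - Real.exp (-1)) * 2⁻¹ * (1 - α)⁻¹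
noncomputable def c2 (α : ℝ) : ℝ := (zC α 1)⁻¹ * (2 - α)⁻¹

lemma c1_pos {α : ℝ} (hα0 : 0 < α) (hα1 : α < 1) : 0 < c1 α := by
  have h0 : (0:ℝ) < 1 - α := by linarith
  have h1 : (0:ℝ) < (1 - α)⁻¹ + α⁻¹ := add_pos (inv_pos.2 h0) (inv_pos.2 hα0)
  have h2 : Real.exp (-1) < 1 := Real.exp_lt_one_iff.2 (by norm_num)
  have h3 : (0:ℝ) < 1 - Real.exp (-1) := by linarith
  have h4 : (0:ℝ) < 1 - α := by linarith
  exact mul_pos (mul_pos (mul_pos (inv_pos.2 h1) h3) (by norm_num)) (inv_pos.2 h4)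

lemma c2_pos {α : ℝ} (hα1 : α < 1) : 0 < c2 α := by
  have := zC_pos hα1 (one_pos)
  have h2 : (0:ℝ) < 2 - α := by linarith
  rw [c2]; exact mul_pos (inv_pos.2 this) (inv_pos.2 h2)

lemma first_moment_ge {α : ℝ} (hα0 : 0 < α) (hα1 : α < 1) {C : ℝ} (hC1 : 1 ≤ C)
    (hC2 : 2 ≤ C ^ (1 - α)) :
    c1 α * C ^ (1 - α) ≤ ∫ w, w ∂(truncBFRY α C) := by
  have hC0 : (0:ℝ) < C := lt_of_lt_of_le one_pos hC1
  rw [show (∫ w, w ∂(truncBFRY α C)) = ∫ w, id w ∂(truncBFRY α C) from rfl,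
    truncBFRY_integral hα1 hC0 id measurable_id]
  have hcongr : ∫ w in Ioc (0:ℝ) C, ((zC α C)⁻¹ * w ^ (-α - 1) * (1 - Real.exp (-w))) * id w
      = (zC α C)⁻¹ * ∫ w in Ioc (0:ℝ) C, w ^ (-α) * (1 - Real.exp (-w)) := by
    rw [← integral_const_mul]
    refine setIntegral_congr_fun measurableSet_Ioc (fun w hw => ?_)
    simp only [id]
    rw [show ((zC α C)⁻¹ * w ^ (-α - 1) * (1 - Real.exp (-w))) * w
        = (zC α C)⁻¹ * ((w ^ (-α - 1) * w) * (1 - Real.exp (-w))) by ring,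
      ← Real.rpow_add_one hw.1.ne' (-α - 1)]
    ring_nf
  rw [hcongr]
  -- lower bound the integral
  have hint : ∫ w in Ioc (0:ℝ) C, w ^ (-α) * (1 - Real.exp (-w))
      ≥ (1 - Real.exp (-1)) * ((C ^ (1 - α) - 1) / (1 - α)) := by
    have hsub : Ioc (1:ℝ) C ⊆ Ioc 0 C := Set.Ioc_subset_Ioc_left zero_le_one
    have step1 : ∫ w in Ioc (1:ℝ) C, w ^ (-α) * (1 - Real.exp (-w))
        ≤ ∫ w in Ioc (0:ℝ) C, w ^ (-α) * (1 - Real.exp (-w)) := by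
      refine setIntegral_mono_set (intOn_ker (-α) (by linarith) C) ?_ hsub.eventuallyLE
      filter_upwards [ae_restrict_mem measurableSet_Ioc] with u hu
      exact mul_nonneg (Real.rpow_nonneg hu.1.le _) (one_sub_exp_nonneg hu.1.le)
    have step2 : ∫ w in Ioc (1:ℝ) C, (1 - Real.exp (-1)) * w ^ (-α)
        ≤ ∫ w in Ioc (1:ℝ) C, w ^ (-α) * (1 - Real.exp (-w)) := by
      refine setIntegral_mono_on
        (((intOn_rpow (-α) (by linarith) C).mono_set hsub).const_mul _)
        ((intOn_ker (-α) (by linarith) C).mono_set hsub) measurableSet_Ioc ?_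
      intro u hu
      have h1 : Real.exp (-u) ≤ Real.exp (-1) := Real.exp_le_exp.2 (by linarith [hu.1])
      have h2 : (0:ℝ) ≤ u ^ (-α) := Real.rpow_nonneg (by linarith [hu.1]) _
      nlinarith
    have step3 : ∫ w in Ioc (1:ℝ) C, (1 - Real.exp (-1)) * w ^ (-α)
        = (1 - Real.exp (-1)) * ((C ^ (1 - α) - 1) / (1 - α)) := by
      rw [integral_const_mul, int_rpow_Ioc (-α) (by linarith) hC1, Real.one_rpow,
        show -α + 1 = 1 - α by ring]
    linarith
  have hz1 : ((1 - α)⁻¹ + α⁻¹)⁻¹ ≤ (zC α C)⁻¹ := by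
    have := zC_pos hα1 hC0
    exact inv_anti₀ this (zC_le hα0 hα1 hC1)
  have hI0 : 0 ≤ (1 - Real.exp (-1)) * ((C ^ (1 - α) - 1) / (1 - α)) := by
    have h2 : Real.exp (-1) < 1 := Real.exp_lt_one_iff.2 (by norm_num)
    have h0 : (0:ℝ) ≤ C ^ (1 - α) - 1 := by linarith
    have h3 : (0:ℝ) < 1 - α := by linarith
    exact mul_nonneg (by linarith) (div_nonneg h0 h3.le)
  have key : ((1 - α)⁻¹ + α⁻¹)⁻¹ * ((1 - Real.exp (-1)) * ((C ^ (1 - α) - 1) / (1 - α)))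
      ≤ (zC α C)⁻¹ * ∫ w in Ioc (0:ℝ) C, w ^ (-α) * (1 - Real.exp (-w)) := by
    refine mul_le_mul hz1 (le_trans ?_ hint) hI0 (inv_nonneg.2 (zC_pos hα1 hC0).le)
    exact le_rfl
  refine le_trans ?_ key
  rw [c1]
  have h2 : Real.exp (-1) < 1 := Real.exp_lt_one_iff.2 (by norm_num)
  have h3 : (0:ℝ) < 1 - α := by linarith
  have h4 : (0:ℝ) < ((1 - α)⁻¹ + α⁻¹)⁻¹ := by positivity
  have h5 : C ^ (1 - α) / 2 ≤ C ^ (1 - α) - 1 := by linarith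
  calc ((1 - α)⁻¹ + α⁻¹)⁻¹ * (1 - Real.exp (-1)) * 2⁻¹ * (1 - α)⁻¹ * C ^ (1 - α)
      = ((1 - α)⁻¹ + α⁻¹)⁻¹ * ((1 - Real.exp (-1)) * ((C ^ (1 - α) / 2) / (1 - α))) := by
        ring
    _ ≤ ((1 - α)⁻¹ + α⁻¹)⁻¹ * ((1 - Real.exp (-1)) * ((C ^ (1 - α) - 1) / (1 - α))) := by
        refine mul_le_mul_of_nonneg_left (mul_le_mul_of_nonneg_left ?_ (by linarith)) h4.le
        exact (div_le_div_iff_of_pos_right h3).2 h5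

lemma zC_mono {α : ℝ} (hα1 : α < 1) {C : ℝ} (hC1 : 1 ≤ C) : zC α 1 ≤ zC α C := by
  refine setIntegral_mono_set (intOn_ker0 hα1 C) ?_
    ((Set.Ioc_subset_Ioc_right hC1).eventuallyLE)
  filter_upwards [ae_restrict_mem measurableSet_Ioc] with u hu
  exact mul_nonneg (Real.rpow_nonneg hu.1.le _) (one_sub_exp_nonneg hu.1.le)

lemma second_moment_le {α : ℝ} (hα0 : 0 < α) (hα1 : α < 1) {C : ℝ} (hC1 : 1 ≤ C) :
    ∫ w, w ^ 2 ∂(truncBFRY α C) ≤ c2 α * C ^ (2 - α) := by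
  have hC0 : (0:ℝ) < C := lt_of_lt_of_le one_pos hC1
  rw [show (∫ w, w ^ 2 ∂(truncBFRY α C)) = ∫ w, (fun w => w ^ 2) w ∂(truncBFRY α C) from rfl,
    truncBFRY_integral hα1 hC0 (fun w => w ^ 2) (by fun_prop)]
  have hcongr : ∫ w in Ioc (0:ℝ) C, ((zC α C)⁻¹ * w ^ (-α - 1) * (1 - Real.exp (-w))) * w ^ 2
      = (zC α C)⁻¹ * ∫ w in Ioc (0:ℝ) C, w ^ (1 - α) * (1 - Real.exp (-w)) := by
    rw [← integral_const_mul]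
    refine setIntegral_congr_fun measurableSet_Ioc (fun w hw => ?_)
    have : w ^ (-α - 1) * w ^ (2:ℕ) = w ^ (1 - α) := by
      rw [← Real.rpow_natCast w 2, ← Real.rpow_add hw.1]
      norm_num
      ring_nf
    calc ((zC α C)⁻¹ * w ^ (-α - 1) * (1 - Real.exp (-w))) * w ^ 2
        = (zC α C)⁻¹ * ((w ^ (-α - 1) * w ^ (2:ℕ)) * (1 - Real.exp (-w))) := by ring
      _ = (zC α C)⁻¹ * (w ^ (1 - α) * (1 - Real.exp (-w))) := by rw [this]
  rw [hcongr]
  have hbound : ∫ w in Ioc (0:ℝ) C, w ^ (1 - α) * (1 - Real.exp (-w))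
      ≤ C ^ (2 - α) / (2 - α) := by
    have step : ∫ w in Ioc (0:ℝ) C, w ^ (1 - α) * (1 - Real.exp (-w))
        ≤ ∫ w in Ioc (0:ℝ) C, w ^ (1 - α) := by
      refine setIntegral_mono_on (intOn_ker (1 - α) (by linarith) C)
        (intOn_rpow (1 - α) (by linarith) C) measurableSet_Ioc ?_
      intro u hu
      have h2 : (0:ℝ) ≤ u ^ (1 - α) := Real.rpow_nonneg hu.1.le _
      nlinarith [Real.exp_pos (-u)]
    rw [int_rpow_Ioc (1 - α) (by linarith) hC0.le, Real.zero_rpow (by intro h; linarith),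
      show (1 - α + 1) = 2 - α by ring, sub_zero] at step
    exact step
  have hz : (zC α C)⁻¹ ≤ (zC α 1)⁻¹ :=
    inv_anti₀ (zC_pos hα1 one_pos) (zC_mono hα1 hC1)
  have hnn : 0 ≤ ∫ w in Ioc (0:ℝ) C, w ^ (1 - α) * (1 - Real.exp (-w)) := by
    refine setIntegral_nonneg measurableSet_Ioc (fun u hu => ?_)
    exact mul_nonneg (Real.rpow_nonneg hu.1.le _) (one_sub_exp_nonneg hu.1.le)
  calc (zC α C)⁻¹ * ∫ w in Ioc (0:ℝ) C, w ^ (1 - α) * (1 - Real.exp (-w))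
      ≤ (zC α 1)⁻¹ * (C ^ (2 - α) / (2 - α)) := by
        refine mul_le_mul hz hbound hnn (inv_nonneg.2 (zC_pos hα1 one_pos).le)
    _ = c2 α * C ^ (2 - α) := by
        rw [c2]; field_simp

lemma key_bound {α : ℝ} (hα0 : 0 < α) (hα1 : α < 1) {Cn : ℝ} {n : ℕ} (hn : 1 ≤ n)
    (hC1 : 1 ≤ Cn) (hC2 : 2 ≤ Cn ^ (1 - α))
    {Ω : Type*} [MeasureSpace Ω] [IsProbabilityMeasure (volume : Measure Ω)]
    (W : Fin n → Ω → ℝ) (hmeas : ∀ i, Measurable (W i))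
    (hindep : iIndepFun W volume)
    (hlaw : ∀ i, Measure.map (W i) volume = truncBFRY α Cn)
    (s : ℕ) (hs : 2 ≤ s) (ε : ℝ) (hε : 0 < ε)
    (hb : (2 / c1 α) * (Cn ^ α / n) < min 1 ε) :
    (volume : Measure Ω) {ω | ε ≤ |(∑ i : Fin n, W i ω ^ s) / (∑ i : Fin n, W i ω) ^ s|}
      ≤ ENNReal.ofReal ((4 * c2 α / (c1 α) ^ 2) * (Cn ^ α / n)) := by
  have hC0 : (0:ℝ) < Cn := lt_of_lt_of_le one_pos hC1
  have hn0 : (0:ℝ) < (n:ℝ) := by exact_mod_cast hn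
  have hc1 := c1_pos hα0 hα1
  have hc2 := c2_pos (α := α) hα1
  set m : ℝ := ∫ w, w ∂(truncBFRY α Cn) with hm
  set q : ℝ := ∫ w, w ^ 2 ∂(truncBFRY α Cn) with hq
  have hmge : c1 α * Cn ^ (1 - α) ≤ m := first_moment_ge hα0 hα1 hC1 hC2
  have hqle : q ≤ c2 α * Cn ^ (2 - α) := second_moment_le hα0 hα1 hC1
  have hX0 : (0:ℝ) < Cn ^ (1 - α) := Real.rpow_pos_of_pos hC0 _
  have hm0 : (0:ℝ) < m := lt_of_lt_of_le (by positivity) hmge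
  -- a.s. membership
  have hae : ∀ i, ∀ᵐ ω, W i ω ∈ Ioc (0:ℝ) Cn := by
    intro i
    have h0 : (volume : Measure Ω) (W i ⁻¹' (Ioc (0:ℝ) Cn)ᶜ) = 0 := by
      have := truncBFRY_compl α Cn
      rw [← hlaw i, Measure.map_apply (hmeas i) measurableSet_Ioc.compl] at this
      exact this
    rw [ae_iff]
    exact h0
  have haeAll : ∀ᵐ ω, ∀ i, W i ω ∈ Ioc (0:ℝ) Cn := (ae_all_iff).2 hae
  -- MemLp
  have hmem : ∀ i, MemLp (W i) 2 (volume : Measure Ω) := by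
    intro i
    refine MemLp.of_bound (hmeas i).aestronglyMeasurable Cn ?_
    filter_upwards [hae i] with ω hω
    rw [Real.norm_eq_abs, abs_of_pos hω.1]
    exact hω.2
  -- expectations
  have hEW : ∀ i, ∫ ω, W i ω = m := by
    intro i
    rw [hm, ← hlaw i]
    exact (integral_map (f := fun w : ℝ => w) (hmeas i).aemeasurable
      measurable_id.aestronglyMeasurable).symm
  have hES : ∫ ω, (∑ i : Fin n, W i) ω = (n : ℝ) * m := by
    have : ∫ ω, (∑ i : Fin n, W i) ω = ∑ i : Fin n, ∫ ω, W i ω := by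
      simp only [Finset.sum_apply]
      exact integral_finset_sum _ (fun i _ => (hmem i).integrable one_le_two)
    rw [this]
    simp [hEW, Finset.card_univ, mul_comm]
  -- variance bound
  have hvar : variance (∑ i : Fin n, W i) volume ≤ (n:ℝ) * (c2 α * Cn ^ (2 - α)) := by
    rw [IndepFun.variance_sum (fun i _ => hmem i)
      (fun i _ j _ hij => hindep.indepFun hij)]
    have hVi : ∀ i : Fin n, variance (W i) volume ≤ c2 α * Cn ^ (2 - α) := by
      intro i
      refine le_trans (variance_le_expectation_sq (hmeas i).aestronglyMeasurable) ?_
      have : ∫ ω, ((W i) ^ 2) ω = q := by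
        rw [hq, ← hlaw i, integral_map (hmeas i).aemeasurable
          (by fun_prop : Measurable (fun w : ℝ => w ^ 2)).aestronglyMeasurable]
        simp [Pi.pow_apply]
      calc (volume : Measure Ω)[(W i) ^ 2] = q := this
        _ ≤ c2 α * Cn ^ (2 - α) := hqle
    calc ∑ i : Fin n, variance (W i) volume ≤ ∑ _i : Fin n, c2 α * Cn ^ (2 - α) :=
          Finset.sum_le_sum (fun i _ => hVi i)
      _ = (n:ℝ) * (c2 α * Cn ^ (2 - α)) := by simp [Finset.card_univ, mul_comm]
  -- Chebyshev
  have hcpos : (0:ℝ) < (n:ℝ) * m / 2 := by positivity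
  have hmemS : MemLp (∑ i : Fin n, W i) 2 (volume : Measure Ω) :=
    memLp_finset_sum' Finset.univ (fun i _ => hmem i)
  have hcheb := meas_ge_le_variance_div_sq (X := ∑ i : Fin n, W i) hmemS hcpos
  rw [hES] at hcheb
  -- real arithmetic bound on the Chebyshev RHS
  have hreal : variance (∑ i : Fin n, W i) volume / ((n:ℝ) * m / 2) ^ 2
      ≤ (4 * c2 α / (c1 α) ^ 2) * (Cn ^ α / n) := by
    have hden : ((n:ℝ) * (c1 α * Cn ^ (1 - α)) / 2) ^ 2 ≤ ((n:ℝ) * m / 2) ^ 2 := by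
      have h1 : (0:ℝ) ≤ (n:ℝ) * (c1 α * Cn ^ (1 - α)) / 2 := by positivity
      have h2 : (n:ℝ) * (c1 α * Cn ^ (1 - α)) / 2 ≤ (n:ℝ) * m / 2 := by
        have := mul_le_mul_of_nonneg_left hmge hn0.le
        linarith
      exact pow_le_pow_left₀ h1 h2 2
    have hdpos : (0:ℝ) < ((n:ℝ) * (c1 α * Cn ^ (1 - α)) / 2) ^ 2 := by positivity
    calc variance (∑ i : Fin n, W i) volume / ((n:ℝ) * m / 2) ^ 2
        ≤ ((n:ℝ) * (c2 α * Cn ^ (2 - α))) / (((n:ℝ) * (c1 α * Cn ^ (1 - α)) / 2) ^ 2) :=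
          div_le_div₀ (by positivity) hvar hdpos hden
      _ = (4 * c2 α / (c1 α) ^ 2) * (Cn ^ α / n) := by
          have hCsplit : Cn ^ ((2:ℝ) - α) = Cn ^ α * (Cn ^ (1 - α)) ^ 2 := by
            rw [← Real.rpow_natCast (Cn ^ (1 - α)) 2, ← Real.rpow_mul hC0.le,
              ← Real.rpow_add hC0]
            norm_num
            ring_nf
          rw [hCsplit]
          field_simp
          ring
  -- event inclusion
  set b : ℝ := (2 / c1 α) * (Cn ^ α / n) with hbdef
  have hb0 : 0 ≤ b := by positivity
  have hb1 : b ≤ 1 := le_of_lt (lt_of_lt_of_le hb (min_le_left _ _))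
  have hbe : b < ε := lt_of_lt_of_le hb (min_le_right _ _)
  have hCnX : Cn = Cn ^ α * Cn ^ (1 - α) := by
    rw [← Real.rpow_add hC0]
    norm_num
  have hsubset : {ω | ε ≤ |(∑ i : Fin n, W i ω ^ s) / (∑ i : Fin n, W i ω) ^ s|}
      ⊆ {ω | (n:ℝ) * m / 2 ≤ |(∑ i : Fin n, W i) ω - (n:ℝ) * m|}
        ∪ {ω | ¬ ∀ i, W i ω ∈ Ioc (0:ℝ) Cn} := by
    intro ω hω
    by_contra hcon
    rw [Set.mem_union, not_or] at hcon
    obtain ⟨hnotA, hnotB⟩ := hcon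
    simp only [Set.mem_setOf_eq, not_le, not_not] at hnotA hnotB hω
    have hgood : ∀ i, W i ω ∈ Ioc (0:ℝ) Cn := hnotB
    set S : ℝ := ∑ i : Fin n, W i ω with hSdef
    have hSapp : (∑ i : Fin n, W i) ω = S := by
      simp [hSdef, Finset.sum_apply]
    rw [hSapp] at hnotA
    have hSgt : (n:ℝ) * m / 2 < S := by
      cases abs_lt.1 hnotA with
      | intro h1 h2 => linarith
    have hSpos : 0 < S := lt_trans hcpos hSgt
    have hnum : (∑ i : Fin n, W i ω ^ s) ≤ Cn ^ (s - 1) * S := by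
      calc (∑ i : Fin n, W i ω ^ s) ≤ ∑ i : Fin n, Cn ^ (s - 1) * W i ω := by
            refine Finset.sum_le_sum (fun i _ => ?_)
            have h0 := (hgood i).1
            have hle := (hgood i).2
            have hpow : W i ω ^ s = W i ω ^ (s - 1) * W i ω := by
              rw [← pow_succ]
              congr 1
              omega
            rw [hpow]
            exact mul_le_mul_of_nonneg_right (pow_le_pow_left₀ h0.le hle _) h0.le
        _ = Cn ^ (s - 1) * S := by rw [← Finset.mul_sum]
    have hnum0 : 0 ≤ ∑ i : Fin n, W i ω ^ s :=
      Finset.sum_nonneg (fun i _ => pow_nonneg (hgood i).1.le _)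
    have hSpow : (0:ℝ) < S ^ s := pow_pos hSpos _
    have habs : |(∑ i : Fin n, W i ω ^ s) / S ^ s| = (∑ i : Fin n, W i ω ^ s) / S ^ s :=
      abs_of_nonneg (div_nonneg hnum0 hSpow.le)
    have hMle : (∑ i : Fin n, W i ω ^ s) / S ^ s ≤ (Cn / S) ^ (s - 1) := by
      have heq : Cn ^ (s - 1) * S / S ^ s = (Cn / S) ^ (s - 1) := by
        rw [div_pow]
        rw [show S ^ s = S ^ (s - 1) * S by rw [← pow_succ]; congr 1; omega]
        field_simp
      rw [← heq]
      exact (div_le_div_iff_of_pos_right hSpow).2 hnum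
    have hCS : Cn / S ≤ b := by
      have h1 : Cn / S ≤ Cn / ((n:ℝ) * m / 2) :=
        div_le_div_of_nonneg_left hC0.le hcpos hSgt.le
      have h2 : Cn / ((n:ℝ) * m / 2) ≤ b := by
        have hd1 : (0:ℝ) < (n:ℝ) * (c1 α * Cn ^ (1 - α)) := by positivity
        have hstep : Cn / ((n:ℝ) * m / 2) ≤ Cn / ((n:ℝ) * (c1 α * Cn ^ (1 - α)) / 2) := by
          refine div_le_div_of_nonneg_left hC0.le (by positivity) ?_
          have := mul_le_mul_of_nonneg_left hmge hn0.le
          linarith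
        refine le_trans hstep (le_of_eq ?_)
        rw [hbdef]
        rw [show Cn / ((n:ℝ) * (c1 α * Cn ^ (1 - α)) / 2)
            = (Cn ^ α * Cn ^ (1 - α)) / ((n:ℝ) * (c1 α * Cn ^ (1 - α)) / 2) by rw [← hCnX]]
        field_simp
      exact le_trans h1 h2
    have hfin : |(∑ i : Fin n, W i ω ^ s) / S ^ s| < ε := by
      rw [habs]
      refine lt_of_le_of_lt (le_trans hMle ?_) hbe
      calc (Cn / S) ^ (s - 1) ≤ b ^ (s - 1) :=
            pow_le_pow_left₀ (div_nonneg hC0.le hSpos.le) hCS _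
        _ ≤ b := pow_le_of_le_one hb0 hb1 (by omega)
    exact absurd hω (not_le.2 hfin)
  calc (volume : Measure Ω) {ω | ε ≤ |(∑ i : Fin n, W i ω ^ s) / (∑ i : Fin n, W i ω) ^ s|}
      ≤ (volume : Measure Ω) ({ω | (n:ℝ) * m / 2 ≤ |(∑ i : Fin n, W i) ω - (n:ℝ) * m|}
          ∪ {ω | ¬ ∀ i, W i ω ∈ Ioc (0:ℝ) Cn}) := measure_mono hsubset
    _ ≤ (volume : Measure Ω) {ω | (n:ℝ) * m / 2 ≤ |(∑ i : Fin n, W i) ω - (n:ℝ) * m|}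
          + (volume : Measure Ω) {ω | ¬ ∀ i, W i ω ∈ Ioc (0:ℝ) Cn} := measure_union_le _ _
    _ = (volume : Measure Ω) {ω | (n:ℝ) * m / 2 ≤ |(∑ i : Fin n, W i) ω - (n:ℝ) * m|} := by
          rw [ae_iff.mp haeAll, add_zero]
    _ ≤ ENNReal.ofReal (variance (∑ i : Fin n, W i) volume / ((n:ℝ) * m / 2) ^ 2) := hcheb
    _ ≤ ENNReal.ofReal ((4 * c2 α / (c1 α) ^ 2) * (Cn ^ α / n)) :=
          ENNReal.ofReal_le_ofReal hreal

/-- For i.i.d. truncated BFRY weights `W_{n,1},…,W_{n,n}` and integer `s ≥ 2`, the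
ratio `M_{s,n} = (∑ᵢ W_{n,i}^s)/(∑ᵢ W_{n,i})^s` converges to `0` in probability. -/
theorem moment_ratio_tendsto_zero_in_probability (α : ℝ) (hα0 : 0 < α) (hα1 : α < 1)
    (C : ℕ → ℝ) (hCpos : ∀ n, 0 < C n)
    (hC : Tendsto C atTop atTop)
    (hCn : Tendsto (fun n => C n ^ α / (n : ℝ)) atTop (nhds 0))
    (s : ℕ) (hs : 2 ≤ s)
    {Ω : Type*} [MeasureSpace Ω] [IsProbabilityMeasure (volume : Measure Ω)]
    (W : (n : ℕ) → Fin n → Ω → ℝ)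
    (hmeas : ∀ n i, Measurable (W n i))
    (hindep : ∀ n, iIndepFun (W n) volume)
    (hlaw : ∀ n i, Measure.map (W n i) volume = truncBFRY α (C n)) :
    ∀ ε > 0,
      Tendsto (fun n : ℕ => (volume : Measure Ω)
          {ω | ε ≤ |(∑ i : Fin n, W n i ω ^ s) / (∑ i : Fin n, W n i ω) ^ s|})
        atTop (nhds 0) := by
  intro ε hε
  have hc1 := c1_pos hα0 hα1
  set K : ℝ := 4 * c2 α / (c1 α) ^ 2 with hK
  have e1 : ∀ᶠ n in atTop, 1 ≤ C n := hC.eventually_ge_atTop 1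
  have hCpow : Tendsto (fun n => C n ^ (1 - α)) atTop atTop :=
    (tendsto_rpow_atTop (by linarith)).comp hC
  have e2 : ∀ᶠ n in atTop, 2 ≤ C n ^ (1 - α) := hCpow.eventually_ge_atTop 2
  have e3 : ∀ᶠ n : ℕ in atTop, 1 ≤ n := eventually_ge_atTop 1
  have htend : Tendsto (fun n => (2 / c1 α) * (C n ^ α / n)) atTop (nhds 0) := by
    simpa using hCn.const_mul (2 / c1 α)
  have e4 : ∀ᶠ n in atTop, (2 / c1 α) * (C n ^ α / n) < min 1 ε :=
    htend.eventually_lt_const (lt_min one_pos hε)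
  have hbound : ∀ᶠ n in atTop, (volume : Measure Ω)
      {ω | ε ≤ |(∑ i : Fin n, W n i ω ^ s) / (∑ i : Fin n, W n i ω) ^ s|}
        ≤ ENNReal.ofReal (K * (C n ^ α / n)) := by
    filter_upwards [e1, e2, e3, e4] with n h1 h2 h3 h4
    exact key_bound hα0 hα1 h3 h1 h2 (W n) (hmeas n) (hindep n) (hlaw n) s hs ε hε h4
  have hlim : Tendsto (fun n => ENNReal.ofReal (K * (C n ^ α / n))) atTop (nhds 0) := by
    have h1 : Tendsto (fun n => K * (C n ^ α / n)) atTop (nhds 0) := by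
      simpa using hCn.const_mul K
    have h2 := (ENNReal.continuous_ofReal.tendsto 0).comp h1
    simpa [Function.comp_def] using h2
  exact tendsto_of_tendsto_of_tendsto_of_le_of_le' tendsto_const_nhds hlim
    (Eventually.of_forall fun n => zero_le) hbound
end

section
/- Under the truncated BFRY setup (α ∈ (0,1), C_n → ∞, C_n^α/n → 0, W_{n,i} i.i.d. with density f_n), fix w > 0. Then the conditional PGF F_n(t; w) = ∏_{i=1}^{n-1} (L_n + w + t·w·W_{n,i})/(L_n + w + w·W_{n,i}), where L_n = ∑_{i=1}^{n-1} W_{n,i}, converges in probability to exp{(t-1)w} as n → ∞, for every fixed t with |t| ≤ 1. -/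
open MeasureTheory ProbabilityTheory Real Set Filter Finset

/-- `|log(1+x) - x| ≤ 2 x²` for `|x| ≤ 1/2`. -/
lemma abs_log_one_add_sub_le {x : ℝ} (hx : |x| ≤ 1/2) :
    |Real.log (1 + x) - x| ≤ 2 * x ^ 2 := by
  have hx1 : -(1/2) ≤ x := (abs_le.1 hx).1
  have hx2 : x ≤ 1/2 := (abs_le.1 hx).2
  have h0 : (0:ℝ) < 1 + x := by linarith
  have hup : Real.log (1 + x) ≤ x := by
    have := Real.log_le_sub_one_of_pos h0
    linarith
  have hlow : x - 2 * x ^ 2 ≤ Real.log (1 + x) := by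
    have hinv : Real.log (1 + x)⁻¹ ≤ (1 + x)⁻¹ - 1 :=
      Real.log_le_sub_one_of_pos (by positivity)
    rw [Real.log_inv] at hinv
    have h1 : x / (1 + x) ≤ Real.log (1 + x) := by
      have : (1 + x)⁻¹ - 1 = -(x / (1+x)) := by field_simp; ring
      rw [this] at hinv; linarith
    have h2 : x - 2 * x ^ 2 ≤ x / (1 + x) := by
      rw [le_div_iff₀ h0]
      nlinarith [sq_nonneg x, sq_nonneg (x + 1/2)]
    linarith
  rw [abs_le]; constructor <;> nlinarith [sq_nonneg x]

set_option maxHeartbeats 1000000 in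
/-- Deterministic estimate for the PGF product. -/
lemma det_prod_bound {m : ℕ} (V : Fin m → ℝ) {Cb w t δ : ℝ} (hCb : 1 ≤ Cb)
    (hV : ∀ i, V i ∈ Set.Ioc 0 Cb) (hw : 0 < w) (ht : |t| ≤ 1)
    (hLpos : 0 < ∑ j, V j)
    (hδ : w * Cb / (∑ j, V j) ≤ δ) (hδ1 : δ ≤ 1/4) (hδ2 : 12 * w * δ ≤ 1) :
    |(∏ i, ((∑ j, V j) + w + t * w * V i) / ((∑ j, V j) + w + w * V i))
      - Real.exp ((t - 1) * w)| ≤ 36 * w * δ := by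
  set L := ∑ j, V j with hLdef
  have ht1 : -1 ≤ t := (abs_le.1 ht).1
  have ht2 : t ≤ 1 := (abs_le.1 ht).2
  have hδ0 : 0 ≤ δ := le_trans (by positivity) hδ
  have hD : ∀ i, 0 < L + w + w * V i := fun i => by
    have := (hV i).1; positivity
  have hRpos : ∀ i, 0 < w * V i / (L + w + w * V i) := fun i =>
    div_pos (by have := (hV i).1; positivity) (hD i)
  have hRle : ∀ i, w * V i / (L + w + w * V i) ≤ δ := by
    intro i
    refine le_trans ?_ hδ
    apply div_le_div₀ (by positivity) ?_ hLpos ?_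
    · exact mul_le_mul_of_nonneg_left (hV i).2 hw.le
    · have := (hV i).1; nlinarith
  have hsumV : ∑ i, w * V i = w * L := by rw [hLdef, Finset.mul_sum]
  have hsum_le : (∑ i, w * V i / (L + w + w * V i)) ≤ w := by
    calc (∑ i, w * V i / (L + w + w * V i)) ≤ ∑ i, w * V i / (L + w) := by
          apply Finset.sum_le_sum
          intro i _
          apply div_le_div₀ (by have := (hV i).1; positivity) le_rfl (by linarith) ?_
          have := (hV i).1; nlinarith
      _ = w * L / (L + w) := by rw [← Finset.sum_div, hsumV]
      _ ≤ w := by rw [div_le_iff₀ (by linarith)]; nlinarith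
  have hsum_ge : w - 2 * w * δ ≤ ∑ i, w * V i / (L + w + w * V i) := by
    have h1 : w * L / (L + w + w * Cb) ≤ ∑ i, w * V i / (L + w + w * V i) := by
      rw [← hsumV, Finset.sum_div]
      apply Finset.sum_le_sum
      intro i _
      apply div_le_div₀ (by have := (hV i).1; positivity) le_rfl (hD i) ?_
      have := (hV i).2; nlinarith
    have hδ' : w * Cb / L ≤ δ := hδ
    have h2 : w - 2 * w * δ ≤ w * L / (L + w + w * Cb) := by
      have hden : 0 < L + w + w * Cb := by nlinarith
      rw [le_div_iff₀ hden]
      have hwc : w * Cb ≤ δ * L := by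
        rw [div_le_iff₀ hLpos] at hδ'; linarith
      have hww : 0 ≤ w * w * (Cb - 1) := mul_nonneg (mul_pos hw hw).le (by linarith)
      have hcb : w * (w + w * Cb) ≤ 2 * w * (w * Cb) := by nlinarith
      have h3 : 2 * w * (w * Cb) ≤ 2 * w * (δ * L) :=
        mul_le_mul_of_nonneg_left hwc (by positivity)
      nlinarith [mul_nonneg (mul_nonneg hw.le hδ0) hw.le,
        mul_nonneg (mul_nonneg (mul_nonneg hw.le hδ0) hw.le) (le_trans zero_le_one hCb)]
    linarith
  have ha_abs : ∀ i, |(t - 1) * (w * V i / (L + w + w * V i))| ≤ 2 * δ := by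
    intro i
    rw [abs_mul]
    have h1 : |t - 1| ≤ 2 := by rw [abs_le]; constructor <;> linarith
    have h2 : |w * V i / (L + w + w * V i)| ≤ δ := by
      rw [abs_of_pos (hRpos i)]; exact hRle i
    exact le_trans (mul_le_mul h1 h2 (abs_nonneg _) (by norm_num)) le_rfl
  have ha_half : ∀ i, |(t - 1) * (w * V i / (L + w + w * V i))| ≤ 1/2 :=
    fun i => le_trans (ha_abs i) (by linarith)
  have hapos : ∀ i, 0 < 1 + (t - 1) * (w * V i / (L + w + w * V i)) := by
    intro i
    have := (abs_le.1 (ha_half i)).1; linarith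
  have hfactor : ∀ i, (L + w + t * w * V i) / (L + w + w * V i)
      = 1 + (t - 1) * (w * V i / (L + w + w * V i)) := by
    intro i
    have hnum : L + w + t * w * V i = (L + w + w * V i) + (t - 1) * (w * V i) := by ring
    rw [hnum, add_div, div_self (hD i).ne', mul_div_assoc]
  have hprod : (∏ i, (L + w + t * w * V i) / (L + w + w * V i))
      = Real.exp (∑ i, Real.log (1 + (t - 1) * (w * V i / (L + w + w * V i)))) := by
    rw [Real.exp_sum]
    refine Finset.prod_congr rfl fun i _ => ?_
    rw [hfactor i, Real.exp_log (hapos i)]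
  rw [hprod]
  have hlogsum : |(∑ i, Real.log (1 + (t - 1) * (w * V i / (L + w + w * V i))))
      - ∑ i, (t - 1) * (w * V i / (L + w + w * V i))| ≤ 8 * δ * w := by
    rw [← Finset.sum_sub_distrib]
    refine le_trans (Finset.abs_sum_le_sum_abs _ _) ?_
    calc (∑ i, |Real.log (1 + (t - 1) * (w * V i / (L + w + w * V i)))
            - (t - 1) * (w * V i / (L + w + w * V i))|)
        ≤ ∑ i, 8 * δ * (w * V i / (L + w + w * V i)) := by
          apply Finset.sum_le_sum
          intro i _
          refine le_trans (abs_log_one_add_sub_le (ha_half i)) ?_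
          have h1 : ((t - 1) * (w * V i / (L + w + w * V i))) ^ 2
              = |(t - 1) * (w * V i / (L + w + w * V i))|
                * |(t - 1) * (w * V i / (L + w + w * V i))| := by
            rw [← abs_mul, sq, abs_mul_self]
          have h2 : |(t - 1) * (w * V i / (L + w + w * V i))|
                * |(t - 1) * (w * V i / (L + w + w * V i))|
              ≤ (2 * δ) * (2 * (w * V i / (L + w + w * V i))) := by
            apply mul_le_mul (ha_abs i) ?_ (abs_nonneg _) (by positivity)
            rw [abs_mul]
            have h1 : |t - 1| ≤ 2 := by rw [abs_le]; constructor <;> linarith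
            rw [abs_of_pos (hRpos i)]
            exact mul_le_mul_of_nonneg_right h1 (hRpos i).le
          nlinarith
      _ = 8 * δ * ∑ i, w * V i / (L + w + w * V i) := by rw [← Finset.mul_sum]
      _ ≤ 8 * δ * w := by nlinarith
  have hasum : |(∑ i, (t - 1) * (w * V i / (L + w + w * V i))) - (t - 1) * w|
      ≤ 4 * w * δ := by
    rw [← Finset.mul_sum, ← mul_sub, abs_mul]
    have h1 : |t - 1| ≤ 2 := by rw [abs_le]; constructor <;> linarith
    have h2 : |(∑ i, w * V i / (L + w + w * V i)) - w| ≤ 2 * w * δ := by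
      rw [abs_le]; constructor <;> linarith
    refine le_trans (mul_le_mul h1 h2 (abs_nonneg _) (by norm_num)) (by ring_nf; nlinarith)
  set X := ∑ i, Real.log (1 + (t - 1) * (w * V i / (L + w + w * V i))) with hXdef
  set y := (t - 1) * w with hydef
  have hXy : |X - y| ≤ 12 * w * δ := by
    have hsplit : X - y = (X - ∑ i, (t - 1) * (w * V i / (L + w + w * V i)))
        + ((∑ i, (t - 1) * (w * V i / (L + w + w * V i))) - y) := by ring
    rw [hsplit]
    refine le_trans (abs_add_le _ _) ?_
    have := add_le_add hlogsum hasum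
    linarith
  have hy0 : y ≤ 0 := mul_nonpos_of_nonpos_of_nonneg (by linarith) hw.le
  have hexp : Real.exp X - Real.exp y = Real.exp y * (Real.exp (X - y) - 1) := by
    rw [mul_sub, mul_one, ← Real.exp_add]; ring_nf
  rw [hexp, abs_mul, abs_of_pos (Real.exp_pos y)]
  have h1 : |Real.exp (X - y) - 1| ≤ 2 * |X - y| :=
    Real.abs_exp_sub_one_le (le_trans hXy hδ2)
  have h2 : Real.exp y ≤ 1 := Real.exp_le_one_iff.2 hy0
  calc Real.exp y * |Real.exp (X - y) - 1| ≤ 1 * (2 * |X - y|) :=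
        mul_le_mul h2 h1 (abs_nonneg _) (by norm_num)
    _ ≤ 36 * w * δ := by nlinarith [abs_nonneg (X - y)]

section BFRYfacts
variable {α : ℝ} (hα0 : 0 < α) (hα1 : α < 1)

lemma g_meas (α : ℝ) : Measurable (fun u : ℝ => u ^ (-α - 1) * (1 - Real.exp (-u))) := by
  fun_prop

lemma g_nonneg {u : ℝ} (hu : 0 < u) : 0 ≤ u ^ (-α - 1) * (1 - Real.exp (-u)) := by
  apply mul_nonneg (Real.rpow_nonneg hu.le _)
  have : Real.exp (-u) ≤ 1 := Real.exp_le_one_iff.2 (by linarith)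
  linarith

lemma g_le_rpow {u : ℝ} (hu : 0 < u) :
    u ^ (-α - 1) * (1 - Real.exp (-u)) ≤ u ^ (-α) := by
  have h1 : 1 - Real.exp (-u) ≤ u := by have := Real.add_one_le_exp (-u); linarith
  have h2 : u ^ (-α - 1) * (1 - Real.exp (-u)) ≤ u ^ (-α - 1) * u :=
    mul_le_mul_of_nonneg_left h1 (Real.rpow_nonneg hu.le _)
  have h3 : u ^ (-α - 1) * u = u ^ (-α) := by
    rw [← Real.rpow_add_one hu.ne' (-α - 1)]; ring_nf
  linarith

include hα1 in
lemma integrableOn_g {Cb : ℝ} (hCb : 0 < Cb) :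
    IntegrableOn (fun u : ℝ => u ^ (-α - 1) * (1 - Real.exp (-u))) (Set.Ioc 0 Cb) := by
  have hbig : IntegrableOn (fun u : ℝ => u ^ (-α)) (Set.Ioc 0 Cb) := by
    rw [← intervalIntegrable_iff_integrableOn_Ioc_of_le hCb.le]
    exact intervalIntegral.intervalIntegrable_rpow' (by linarith)
  refine MeasureTheory.Integrable.mono hbig ((g_meas α).aestronglyMeasurable) ?_
  filter_upwards [ae_restrict_mem measurableSet_Ioc] with u hu
  have hu0 : (0:ℝ) < u := hu.1
  rw [Real.norm_eq_abs, Real.norm_eq_abs, abs_of_nonneg (g_nonneg hu0),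
    abs_of_nonneg (Real.rpow_nonneg hu0.le _)]
  exact g_le_rpow hu0

include hα0 hα1 in
lemma Zr_le {Cb : ℝ} (hCb : 1 ≤ Cb) :
    (∫ u in Set.Ioc (0:ℝ) Cb, u ^ (-α - 1) * (1 - Real.exp (-u))) ≤ (1 - α)⁻¹ + α⁻¹ := by
  have hCb0 : (0:ℝ) < Cb := by linarith
  have hsplit : Set.Ioc (0:ℝ) Cb = Set.Ioc (0:ℝ) 1 ∪ Set.Ioc (1:ℝ) Cb := (Ioc_union_Ioc_eq_Ioc zero_le_one hCb).symm
  have hint := integrableOn_g hα1 hCb0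
  have hint1 : IntegrableOn (fun u : ℝ => u ^ (-α - 1) * (1 - Real.exp (-u))) (Set.Ioc 0 1) :=
    hint.mono_set (by rw [hsplit]; exact subset_union_left)
  have hint2 : IntegrableOn (fun u : ℝ => u ^ (-α - 1) * (1 - Real.exp (-u))) (Set.Ioc 1 Cb) :=
    hint.mono_set (by rw [hsplit]; exact subset_union_right)
  rw [hsplit, setIntegral_union (Set.Ioc_disjoint_Ioc.2 (by simp)) measurableSet_Ioc hint1 hint2]
  have hb1 : (∫ u in Set.Ioc (0:ℝ) 1, u ^ (-α - 1) * (1 - Real.exp (-u))) ≤ (1 - α)⁻¹ := by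
    have hr : IntegrableOn (fun u : ℝ => u ^ (-α)) (Set.Ioc 0 1) := by
      rw [← intervalIntegrable_iff_integrableOn_Ioc_of_le zero_le_one]
      exact intervalIntegral.intervalIntegrable_rpow' (by linarith)
    have hle : (∫ u in Set.Ioc (0:ℝ) 1, u ^ (-α - 1) * (1 - Real.exp (-u)))
        ≤ ∫ u in Set.Ioc (0:ℝ) 1, u ^ (-α) := by
      apply setIntegral_mono_on hint1 hr measurableSet_Ioc
      exact fun u hu => g_le_rpow hu.1
    have hval : (∫ u in Set.Ioc (0:ℝ) 1, u ^ (-α)) = (1 - α)⁻¹ := by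
      rw [← intervalIntegral.integral_of_le zero_le_one]
      rw [integral_rpow (Or.inl (by linarith))]
      rw [Real.one_rpow, Real.zero_rpow (by linarith)]
      field_simp
      ring
    linarith
  have hb2 : (∫ u in Set.Ioc (1:ℝ) Cb, u ^ (-α - 1) * (1 - Real.exp (-u))) ≤ α⁻¹ := by
    have h0mem : (0:ℝ) ∉ Set.uIcc (1:ℝ) Cb := by
      rw [Set.uIcc_of_le hCb]; simp
    have hr : IntegrableOn (fun u : ℝ => u ^ (-α - 1)) (Set.Ioc 1 Cb) := by
      rw [← intervalIntegrable_iff_integrableOn_Ioc_of_le hCb]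
      exact intervalIntegral.intervalIntegrable_rpow (Or.inr h0mem)
    have hle : (∫ u in Set.Ioc (1:ℝ) Cb, u ^ (-α - 1) * (1 - Real.exp (-u)))
        ≤ ∫ u in Set.Ioc (1:ℝ) Cb, u ^ (-α - 1) := by
      apply setIntegral_mono_on hint2 hr measurableSet_Ioc
      intro u hu
      have hu0 : (0:ℝ) < u := lt_of_lt_of_le zero_lt_one hu.1.le
      have h1 : 1 - Real.exp (-u) ≤ 1 := by linarith [Real.exp_pos (-u)]
      nlinarith [Real.rpow_nonneg hu0.le (-α - 1), mul_le_mul_of_nonneg_left h1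
        (Real.rpow_nonneg hu0.le (-α - 1))]
    have hval : (∫ u in Set.Ioc (1:ℝ) Cb, u ^ (-α - 1)) = (1 - Cb ^ (-α)) / α := by
      rw [← intervalIntegral.integral_of_le hCb]
      rw [integral_rpow (Or.inr ⟨by intro h; simp at h; linarith, h0mem⟩)]
      rw [Real.one_rpow]
      have : -α - 1 + 1 = -α := by ring
      rw [this, div_eq_div_iff (neg_ne_zero.2 hα0.ne') hα0.ne']
      ring
    have hCba : 0 ≤ Cb ^ (-α) := Real.rpow_nonneg hCb0.le _
    have : (1 - Cb ^ (-α)) / α ≤ α⁻¹ := by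
      rw [div_le_iff₀ hα0, inv_mul_cancel₀ hα0.ne']
      nlinarith
    linarith
  exact add_le_add hb1 hb2

include hα0 hα1 in
lemma Zr_pos {Cb : ℝ} (hCb : 1 ≤ Cb) :
    0 < ∫ u in Set.Ioc (0:ℝ) Cb, u ^ (-α - 1) * (1 - Real.exp (-u)) := by
  have hCb0 : (0:ℝ) < Cb := by linarith
  have hint := integrableOn_g hα1 hCb0
  have hmono : (∫ u in Set.Ioc ((1:ℝ)/2) 1, u ^ (-α - 1) * (1 - Real.exp (-u)))
      ≤ ∫ u in Set.Ioc (0:ℝ) Cb, u ^ (-α - 1) * (1 - Real.exp (-u)) := by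
    apply setIntegral_mono_set hint
    · filter_upwards [ae_restrict_mem measurableSet_Ioc] with u hu
      exact g_nonneg hu.1
    · exact HasSubset.Subset.eventuallyLE (Set.Ioc_subset_Ioc (by norm_num) hCb)
  have hconst : (1 - Real.exp (-(1/2))) * (volume (Set.Ioc ((1:ℝ)/2) 1)).toReal
      ≤ ∫ u in Set.Ioc ((1:ℝ)/2) 1, u ^ (-α - 1) * (1 - Real.exp (-u)) := by
    apply setIntegral_ge_of_const_le_real measurableSet_Ioc (by simp)
    · intro u hu
      have hu0 : (0:ℝ) < u := lt_of_lt_of_le (by norm_num) hu.1.le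
      have h1 : (1:ℝ) ≤ u ^ (-α - 1) :=
        Real.one_le_rpow_of_pos_of_le_one_of_nonpos hu0 hu.2 (by linarith)
      have h2 : 1 - Real.exp (-(1/2)) ≤ 1 - Real.exp (-u) := by
        have : Real.exp (-u) ≤ Real.exp (-(1/2)) := Real.exp_le_exp.2 (by linarith [hu.1])
        linarith
      have h3 : 0 ≤ 1 - Real.exp (-u) := by
        have : Real.exp (-u) ≤ 1 := Real.exp_le_one_iff.2 (by linarith)
        linarith
      nlinarith
    · exact hint.mono_set (Set.Ioc_subset_Ioc (by norm_num) hCb)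
  have hvol : (volume (Set.Ioc ((1:ℝ)/2) 1)).toReal = 1/2 := by
    rw [Real.volume_Ioc, ENNReal.toReal_ofReal (by norm_num)]
    norm_num
  rw [hvol] at hconst
  have hexp : Real.exp (-(1/2)) < 1 := Real.exp_lt_one_iff.2 (by norm_num)
  nlinarith
end BFRYfacts


lemma truncBFRY_compl_null (α Cb : ℝ) : truncBFRY α Cb (Set.Ioc (0:ℝ) Cb)ᶜ = 0 := by
  rw [truncBFRY, withDensity_apply _ measurableSet_Ioc.compl]
  rw [setLIntegral_congr_fun_ae measurableSet_Ioc.compl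
    (ae_of_all _ (fun x (hx : x ∈ (Set.Ioc (0:ℝ) Cb)ᶜ) => by
      rw [Set.indicator_of_notMem hx, ENNReal.ofReal_zero]))]
  simp

section tail
variable {α : ℝ} (hα0 : 0 < α) (hα1 : α < 1)

include hα0 hα1 in
lemma truncBFRY_tail {Cb : ℝ} (hCb : 2 ≤ Cb) :
    ENNReal.ofReal ((((1-α)⁻¹ + α⁻¹)⁻¹ * Cb ^ (-α-1) * (1 - Real.exp (-1))) * (Cb/2))
      ≤ truncBFRY α Cb (Set.Ioc (Cb/2) Cb) := by
  have hCb0 : (0:ℝ) < Cb := by linarith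
  have hCb1 : (1:ℝ) ≤ Cb := by linarith
  have hZpos := Zr_pos hα0 hα1 hCb1
  have hZle := Zr_le hα0 hα1 hCb1
  have hZmax : (0:ℝ) < (1-α)⁻¹ + α⁻¹ := by
    have : (0:ℝ) < (1-α)⁻¹ := by
      apply inv_pos.2; linarith
    have h2 : (0:ℝ) < α⁻¹ := inv_pos.2 hα0
    linarith
  set Z := ∫ u in Set.Ioc (0:ℝ) Cb, u ^ (-α - 1) * (1 - Real.exp (-u)) with hZdef
  set b : ℝ := ((1-α)⁻¹ + α⁻¹)⁻¹ * Cb ^ (-α-1) * (1 - Real.exp (-1)) with hbdef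
  have hexp1 : Real.exp (-1) < 1 := Real.exp_lt_one_iff.2 (by norm_num)
  have hb0 : 0 ≤ b := by
    apply mul_nonneg (mul_nonneg (inv_nonneg.2 hZmax.le) (Real.rpow_nonneg hCb0.le _))
    linarith
  rw [truncBFRY, withDensity_apply _ measurableSet_Ioc]
  have hstep : ENNReal.ofReal (b * (Cb/2)) = ∫⁻ _x in Set.Ioc (Cb/2) Cb,
      ENNReal.ofReal b := by
    rw [setLIntegral_const, Real.volume_Ioc, ← ENNReal.ofReal_mul hb0]
    congr 1
    ring
  rw [hstep]
  refine lintegral_mono_ae ?_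
  filter_upwards [ae_restrict_mem measurableSet_Ioc] with x hx
  apply ENNReal.ofReal_le_ofReal
  have hx0 : (0:ℝ) < x := lt_trans (by linarith) hx.1
  have hxmem : x ∈ Set.Ioc (0:ℝ) Cb := ⟨hx0, hx.2⟩
  rw [Set.indicator_of_mem hxmem]
  have h1 : ((1-α)⁻¹ + α⁻¹)⁻¹ ≤ Z⁻¹ := by
    apply inv_anti₀ hZpos hZle
  have h2 : Cb ^ (-α-1) ≤ x ^ (-α-1) :=
    Real.rpow_le_rpow_of_nonpos hx0 hx.2 (by linarith)
  have h3 : 1 - Real.exp (-1) ≤ 1 - Real.exp (-x) := by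
    have : Real.exp (-x) ≤ Real.exp (-1) := Real.exp_le_exp.2 (by linarith [hx.1])
    linarith
  have h4 : 0 ≤ 1 - Real.exp (-x) := by
    have : Real.exp (-x) ≤ 1 := Real.exp_le_one_iff.2 (by linarith)
    linarith
  calc b ≤ Z⁻¹ * Cb ^ (-α-1) * (1 - Real.exp (-1)) := by
        apply mul_le_mul_of_nonneg_right ?_ (by linarith)
        exact mul_le_mul_of_nonneg_right h1 (Real.rpow_nonneg hCb0.le _)
    _ ≤ Z⁻¹ * x ^ (-α-1) * (1 - Real.exp (-x)) := by
        apply mul_le_mul ?_ h3 (by linarith) ?_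
        · exact mul_le_mul_of_nonneg_left h2 (inv_nonneg.2 hZpos.le)
        · exact mul_nonneg (inv_nonneg.2 hZpos.le) (Real.rpow_nonneg hx0.le _)
end tail

section RV
variable {α : ℝ} (hα0 : 0 < α) (hα1 : α < 1)
variable {Ω : Type*} [MeasureSpace Ω] [IsProbabilityMeasure (volume : Measure Ω)]
variable {Cb : ℝ} {X : Ω → ℝ}

lemma ae_mem_Ioc (hX : Measurable X) (hlaw : Measure.map X volume = truncBFRY α Cb) :
    ∀ᵐ ω, X ω ∈ Set.Ioc (0:ℝ) Cb := by
  have h : (volume : Measure Ω) (X ⁻¹' (Set.Ioc (0:ℝ) Cb)ᶜ) = 0 := by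
    rw [← Measure.map_apply hX measurableSet_Ioc.compl, hlaw]
    exact truncBFRY_compl_null α Cb
  rw [ae_iff]
  exact h

lemma memL2_of_law (hCb0 : 0 ≤ Cb) (hX : Measurable X)
    (hlaw : Measure.map X volume = truncBFRY α Cb) : MemLp X 2 (volume : Measure Ω) := by
  refine MemLp.of_bound hX.aestronglyMeasurable Cb ?_
  filter_upwards [ae_mem_Ioc hX hlaw] with ω hω
  rw [Real.norm_eq_abs, abs_of_pos hω.1]
  exact hω.2

lemma exp_eq_m1 (hX : Measurable X) (hlaw : Measure.map X volume = truncBFRY α Cb) :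
    ∫ ω, X ω = ∫ x, x ∂(truncBFRY α Cb) := by
  rw [← hlaw]
  exact (integral_map hX.aemeasurable aestronglyMeasurable_id).symm

include hα0 hα1 in
lemma exp_lower (hCb : 2 ≤ Cb) (hX : Measurable X)
    (hlaw : Measure.map X volume = truncBFRY α Cb) :
    (((1-α)⁻¹ + α⁻¹)⁻¹ * (1 - Real.exp (-1)) / 4) * Cb ^ (1-α) ≤ ∫ ω, X ω := by
  have hCb0 : (0:ℝ) < Cb := by linarith
  have hint : Integrable X (volume : Measure Ω) :=
    (memL2_of_law hCb0.le hX hlaw).integrable one_le_two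
  set A := X ⁻¹' (Set.Ioc (Cb/2) Cb) with hAdef
  have hAm : MeasurableSet A := hX measurableSet_Ioc
  have h1 : ∫ ω in A, X ω ≤ ∫ ω, X ω := by
    apply setIntegral_le_integral hint
    filter_upwards [ae_mem_Ioc hX hlaw] with ω hω
    exact hω.1.le
  have h2 : (Cb/2) * ((volume : Measure Ω) A).toReal ≤ ∫ ω in A, X ω := by
    apply setIntegral_ge_of_const_le_real hAm (measure_ne_top _ _) ?_ hint.integrableOn
    intro ω hω
    exact (hω.1).le
  set b : ℝ := ((1-α)⁻¹ + α⁻¹)⁻¹ * Cb ^ (-α-1) * (1 - Real.exp (-1)) with hbdef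
  have hZmax : (0:ℝ) < (1-α)⁻¹ + α⁻¹ := by
    have h3 : (0:ℝ) < (1-α)⁻¹ := inv_pos.2 (by linarith)
    have h4 : (0:ℝ) < α⁻¹ := inv_pos.2 hα0
    linarith
  have hexp1 : Real.exp (-1) < 1 := Real.exp_lt_one_iff.2 (by norm_num)
  have hb0 : 0 ≤ b := by
    apply mul_nonneg (mul_nonneg (inv_nonneg.2 hZmax.le) (Real.rpow_nonneg hCb0.le _))
    linarith
  have hPA : ENNReal.ofReal (b * (Cb/2)) ≤ (volume : Measure Ω) A := by
    rw [hAdef, ← Measure.map_apply hX measurableSet_Ioc, hlaw]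
    exact truncBFRY_tail hα0 hα1 hCb
  have hPA' : b * (Cb/2) ≤ ((volume : Measure Ω) A).toReal := by
    have := ENNReal.toReal_mono (measure_ne_top _ _) hPA
    rwa [ENNReal.toReal_ofReal (by positivity)] at this
  have hkey : (Cb/2) * (b * (Cb/2)) ≤ ∫ ω, X ω := by
    have := mul_le_mul_of_nonneg_left hPA' (by positivity : (0:ℝ) ≤ Cb/2)
    linarith
  have hrw : (Cb/2) * (b * (Cb/2)) = (((1-α)⁻¹ + α⁻¹)⁻¹ * (1 - Real.exp (-1)) / 4)
      * Cb ^ (1-α) := by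
    have hpow : Cb ^ (-α-1) * Cb ^ (2:ℝ) = Cb ^ (1-α) := by
      rw [← Real.rpow_add hCb0]; ring_nf
    have hsq : Cb ^ (2:ℝ) = Cb * Cb := by
      rw [show (2:ℝ) = ((2:ℕ):ℝ) by norm_num, Real.rpow_natCast]; ring
    rw [hbdef, ← hpow, hsq]
    ring
  linarith [hrw ▸ hkey]

include hα0 hα1 in
lemma exp_pos_of_law (hCb : 2 ≤ Cb) (hX : Measurable X)
    (hlaw : Measure.map X volume = truncBFRY α Cb) : 0 < ∫ ω, X ω := by
  refine lt_of_lt_of_le ?_ (exp_lower hα0 hα1 hCb hX hlaw)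
  have hZmax : (0:ℝ) < (1-α)⁻¹ + α⁻¹ := by
    have h3 : (0:ℝ) < (1-α)⁻¹ := inv_pos.2 (by linarith)
    have h4 : (0:ℝ) < α⁻¹ := inv_pos.2 hα0
    linarith
  have hexp1 : Real.exp (-1) < 1 := Real.exp_lt_one_iff.2 (by norm_num)
  have hP : (0:ℝ) < Cb ^ (1-α) := Real.rpow_pos_of_pos (by linarith) _
  exact mul_pos (div_pos (mul_pos (inv_pos.2 hZmax) (by linarith)) (by norm_num)) hP

lemma var_le_of_law (hCb0 : 0 < Cb) (hX : Measurable X)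
    (hlaw : Measure.map X volume = truncBFRY α Cb) :
    variance X (volume : Measure Ω) ≤ Cb * ∫ ω, X ω := by
  have hm2 : MemLp X 2 (volume : Measure Ω) := memL2_of_law hCb0.le hX hlaw
  have hvar := variance_eq_sub hm2
  have hsq : ∫ ω, (X ω) ^ 2 ≤ Cb * ∫ ω, X ω := by
    rw [← integral_const_mul]
    apply integral_mono_ae hm2.integrable_sq ((hm2.integrable one_le_two).const_mul Cb)
    filter_upwards [ae_mem_Ioc hX hlaw] with ω hω
    have h1 := hω.1
    have h2 := hω.2
    nlinarith
  have hsq' : (∫ ω, X ω) ^ 2 ≥ 0 := sq_nonneg _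
  calc variance X volume = (∫ ω, (X ω) ^ 2) - (∫ ω, X ω) ^ 2 := by
        rw [hvar]; rfl
    _ ≤ Cb * ∫ ω, X ω := by linarith
end RV

lemma q_tendsto {α : ℝ} {C : ℕ → ℝ}
    (hCn : Tendsto (fun n => C n ^ α / (n : ℝ)) atTop (nhds 0)) :
    Tendsto (fun n => C n ^ α / ((n : ℝ) - 1)) atTop (nhds 0) := by
  have h4 : Tendsto (fun n : ℕ => (n:ℝ) - 1) atTop atTop :=
    (tendsto_natCast_atTop_atTop (R := ℝ)).atTop_add tendsto_const_nhds
  have h5 : Tendsto (fun n : ℕ => ((n:ℝ) - 1)⁻¹) atTop (nhds 0) :=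
    Tendsto.comp tendsto_inv_atTop_zero h4
  have h3 : Tendsto (fun n : ℕ => 1 + ((n:ℝ) - 1)⁻¹) atTop (nhds 1) := by
    have h6 : Tendsto (fun _ : ℕ => (1:ℝ)) atTop (nhds 1) := tendsto_const_nhds
    simpa using h6.add h5
  have h2 : Tendsto (fun n : ℕ => (n:ℝ) / ((n:ℝ) - 1)) atTop (nhds 1) := by
    refine Tendsto.congr' ?_ h3
    filter_upwards [eventually_ge_atTop 2] with n hn
    have hn1 : ((n:ℝ) - 1) ≠ 0 := by
      have : (2:ℝ) ≤ (n:ℝ) := by exact_mod_cast hn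
      linarith
    field_simp
    ring
  have hmul := hCn.mul h2
  rw [mul_one] at hmul
  refine Tendsto.congr' ?_ hmul
  filter_upwards [eventually_ge_atTop 2] with n hn
  have h2n : (2:ℝ) ≤ (n:ℝ) := by exact_mod_cast hn
  have hn0 : (n:ℝ) ≠ 0 := by linarith
  have hn1 : ((n:ℝ) - 1) ≠ 0 := by linarith
  field_simp

set_option maxHeartbeats 2000000 in
/-- Convergence of the conditional degree PGF: with `W_{n,i}` i.i.d. truncated BFRY
and `L_n = ∑ᵢ W_{n,i}`, for fixed `w > 0` and `|t| ≤ 1`, the product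
`F_n(t;w) = ∏ᵢ (L_n+w+t·w·W_{n,i})/(L_n+w+w·W_{n,i})` converges in probability to
`exp{(t-1)w}` as `n → ∞`. -/
theorem conditional_pgf_tendsto_poisson (α : ℝ) (hα0 : 0 < α) (hα1 : α < 1)
    (C : ℕ → ℝ) (hCpos : ∀ n, 0 < C n)
    (hC : Tendsto C atTop atTop)
    (hCn : Tendsto (fun n => C n ^ α / (n : ℝ)) atTop (nhds 0))
    {Ω : Type*} [MeasureSpace Ω] [IsProbabilityMeasure (volume : Measure Ω)]
    (W : (n : ℕ) → Fin (n - 1) → Ω → ℝ)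
    (hmeas : ∀ n i, Measurable (W n i))
    (hindep : ∀ n, iIndepFun (W n) volume)
    (hlaw : ∀ n i, Measure.map (W n i) volume = truncBFRY α (C n))
    (w : ℝ) (hw : 0 < w) (t : ℝ) (ht : |t| ≤ 1) :
    ∀ ε > 0,
      Tendsto (fun n : ℕ => (volume : Measure Ω)
          {ω | ε ≤ |(∏ i : Fin (n - 1),
              ((∑ j : Fin (n - 1), W n j ω) + w + t * w * W n i ω)
                / ((∑ j : Fin (n - 1), W n j ω) + w + w * W n i ω))
            - Real.exp ((t - 1) * w)|})
        atTop (nhds 0) := by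
  intro ε hε
  set c1 : ℝ := ((1-α)⁻¹ + α⁻¹)⁻¹ * (1 - Real.exp (-1)) / 4 with hc1def
  have hZmax : (0:ℝ) < (1-α)⁻¹ + α⁻¹ := by
    have h3 : (0:ℝ) < (1-α)⁻¹ := inv_pos.2 (by linarith)
    have h4 : (0:ℝ) < α⁻¹ := inv_pos.2 hα0
    linarith
  have hexp1 : Real.exp (-1) < 1 := Real.exp_lt_one_iff.2 (by norm_num)
  have hc1 : 0 < c1 := by
    apply div_pos (mul_pos (inv_pos.2 hZmax) (by linarith)) (by norm_num)
  set K : ℝ := 2 * w / c1 with hKdef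
  have hK : 0 < K := div_pos (by linarith) hc1
  set q : ℕ → ℝ := fun n => C n ^ α / ((n : ℝ) - 1) with hqdef
  have hq : Tendsto q atTop (nhds 0) := q_tendsto hCn
  set σ : ℝ := min (min ((1/4) / K) ((1/(12*w)) / K)) ((ε/(36*w)) / K) with hσdef
  have hσ : 0 < σ := by
    apply lt_min (lt_min (div_pos (by norm_num) hK)
      (div_pos (by positivity) hK)) (div_pos (div_pos hε (by linarith)) hK)
  -- the eventual bound
  have key : ∀ᶠ n in atTop, (volume : Measure Ω)
      {ω | ε ≤ |(∏ i : Fin (n - 1),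
          ((∑ j : Fin (n - 1), W n j ω) + w + t * w * W n i ω)
            / ((∑ j : Fin (n - 1), W n j ω) + w + w * W n i ω))
        - Real.exp ((t - 1) * w)|}
      ≤ ENNReal.ofReal ((4 / c1) * q n) := by
    filter_upwards [hC.eventually_ge_atTop 2, eventually_ge_atTop 2,
      hq.eventually (gt_mem_nhds hσ)] with n hC2 hn2 hqlt
    have hC0 : (0:ℝ) < C n := hCpos n
    have hC1 : (1:ℝ) ≤ C n := by linarith
    have hn1 : 1 ≤ n - 1 := by omega
    have hcast : ((n - 1 : ℕ) : ℝ) = (n:ℝ) - 1 := by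
      have : (1:ℕ) ≤ n := by omega
      push_cast [Nat.cast_sub this]
      ring
    set N1 : ℝ := (n:ℝ) - 1 with hN1def
    have hN1 : (1:ℝ) ≤ N1 := by
      have : (2:ℝ) ≤ (n:ℝ) := by exact_mod_cast hn2
      rw [hN1def]; linarith
    have hq0 : 0 ≤ q n := by
      apply div_nonneg (Real.rpow_nonneg hC0.le _) (by linarith)
    -- moments
    have i0 : Fin (n - 1) := ⟨0, by omega⟩
    set m1 : ℝ := ∫ ω, W n i0 ω with hm1def
    have hm1eq : ∀ i : Fin (n - 1), ∫ ω, W n i ω = m1 := by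
      intro i
      rw [hm1def, exp_eq_m1 (hmeas n i) (hlaw n i), exp_eq_m1 (hmeas n i0) (hlaw n i0)]
    have hm1low : c1 * C n ^ (1-α) ≤ m1 :=
      exp_lower hα0 hα1 hC2 (hmeas n i0) (hlaw n i0)
    have hm1pos : 0 < m1 := exp_pos_of_law hα0 hα1 hC2 (hmeas n i0) (hlaw n i0)
    set cn : ℝ := N1 * m1 / 2 with hcndef
    have hcn : 0 < cn := by positivity
    have hL2 : ∀ i : Fin (n - 1), MemLp (W n i) 2 (volume : Measure Ω) :=
      fun i => memL2_of_law hC0.le (hmeas n i) (hlaw n i)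
    have hint : ∀ i : Fin (n - 1), Integrable (W n i) (volume : Measure Ω) :=
      fun i => (hL2 i).integrable one_le_two
    have hL2sum : MemLp (∑ i : Fin (n - 1), W n i) 2 (volume : Measure Ω) :=
      memLp_finset_sum' _ (fun i _ => hL2 i)
    -- expectation of the sum
    have hEL : (∫ ω, (∑ i : Fin (n - 1), W n i) ω) = N1 * m1 := by
      have h1 : (∫ ω, (∑ i : Fin (n - 1), W n i) ω)
          = ∑ i : Fin (n - 1), ∫ ω, W n i ω := by
        simp only [Finset.sum_apply]
        exact integral_finset_sum _ (fun i _ => hint i)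
      rw [h1]
      simp only [hm1eq, Finset.sum_const, Finset.card_univ, Fintype.card_fin, nsmul_eq_mul]
      rw [hcast]
    -- variance bound
    have hvar : variance (∑ i : Fin (n - 1), W n i) volume ≤ N1 * (C n * m1) := by
      rw [IndepFun.variance_sum (fun i _ => hL2 i)
        (fun i _ j _ hij => (hindep n).indepFun hij)]
      calc (∑ i : Fin (n - 1), variance (W n i) volume)
          ≤ ∑ _i : Fin (n - 1), C n * m1 := by
            apply Finset.sum_le_sum
            intro i _
            have := var_le_of_law hC0 (hmeas n i) (hlaw n i)
            rwa [hm1eq i] at this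
        _ = N1 * (C n * m1) := by
            simp only [Finset.sum_const, Finset.card_univ, Fintype.card_fin, nsmul_eq_mul]
            rw [hcast]
    -- Chebyshev
    have hcheb := meas_ge_le_variance_div_sq (μ := (volume : Measure Ω)) hL2sum hcn
    -- bound the Chebyshev quantity
    have hCC : C n ^ α * C n ^ (1-α) = C n := by
      rw [← Real.rpow_add hC0]
      norm_num
    have hfrac : variance (∑ i : Fin (n - 1), W n i) volume / cn ^ 2 ≤ (4 / c1) * q n := by
      rw [div_le_iff₀ (by positivity)]
      have hP0 : (0:ℝ) < C n ^ α := Real.rpow_pos_of_pos hC0 _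
      have hN1ne : N1 ≠ 0 := by linarith
      have hBle : C n ^ (1-α) ≤ m1 / c1 := (le_div_iff₀ hc1).2 (by linarith)
      calc variance (∑ i : Fin (n - 1), W n i) volume ≤ N1 * (C n * m1) := hvar
        _ = N1 * (C n ^ α * C n ^ (1-α)) * m1 := by rw [hCC]; ring
        _ ≤ N1 * (C n ^ α * (m1 / c1)) * m1 := by
            have hA0 : (0:ℝ) ≤ C n ^ α := hP0.le
            have := mul_le_mul_of_nonneg_left hBle hA0
            nlinarith [hm1pos.le, hN1]
        _ = (4 / c1) * q n * cn ^ 2 := by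
            rw [hqdef, hcndef]
            rw [hN1def] at hN1ne ⊢
            field_simp
            ring
    -- the null set
    have hae : ∀ᵐ ω, ∀ i : Fin (n - 1), W n i ω ∈ Set.Ioc (0:ℝ) (C n) :=
      ae_all_iff.2 (fun i => ae_mem_Ioc (hmeas n i) (hlaw n i))
    have hNnull : (volume : Measure Ω) {ω | ¬ ∀ i : Fin (n - 1),
        W n i ω ∈ Set.Ioc (0:ℝ) (C n)} = 0 := by
      rw [ae_iff] at hae
      exact hae
    -- inclusion
    set δn : ℝ := w * C n / cn with hδndef
    have hδn0 : 0 ≤ δn := by positivity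
    have hδnK : δn ≤ K * q n := by
      rw [hδndef, hcndef, hKdef, hqdef]
      rw [div_le_iff₀ (by positivity)]
      have hN1ne : N1 ≠ 0 := by linarith
      have hBle : C n ^ (1-α) ≤ m1 / c1 := (le_div_iff₀ hc1).2 (by linarith)
      have hA0 : (0:ℝ) ≤ C n ^ α := (Real.rpow_pos_of_pos hC0 _).le
      calc w * C n = w * (C n ^ α * C n ^ (1-α)) := by rw [hCC]
        _ ≤ w * (C n ^ α * (m1 / c1)) := by
            have := mul_le_mul_of_nonneg_left hBle hA0
            nlinarith
        _ = 2 * w / c1 * (C n ^ α / N1) * (N1 * m1 / 2) := by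
            field_simp
    have hδsmall : δn ≤ 1/4 ∧ 12 * w * δn ≤ 1 ∧ 36 * w * δn < ε := by
      have h1 : K * q n < K * σ := by
        apply mul_lt_mul_of_pos_left hqlt hK
      have hσ1 : K * σ ≤ 1/4 := by
        have : σ ≤ (1/4) / K := le_trans (min_le_left _ _) (min_le_left _ _)
        rw [le_div_iff₀ hK] at this; linarith
      have hσ2 : K * σ ≤ 1/(12*w) := by
        have : σ ≤ (1/(12*w)) / K := le_trans (min_le_left _ _) (min_le_right _ _)
        rw [le_div_iff₀ hK] at this; linarith
      have hσ3 : K * σ ≤ ε/(36*w) := by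
        have : σ ≤ (ε/(36*w)) / K := min_le_right _ _
        rw [le_div_iff₀ hK] at this; linarith
      refine ⟨by linarith, ?_, ?_⟩
      · have h2 : δn ≤ 1/(12*w) := by linarith
        rw [le_div_iff₀ (by linarith : (0:ℝ) < 12*w)] at h2
        linarith
      · have h2 : δn < ε/(36*w) := by linarith
        rw [lt_div_iff₀ (by linarith : (0:ℝ) < 36*w)] at h2
        linarith
    have hsubset : {ω | ε ≤ |(∏ i : Fin (n - 1),
          ((∑ j : Fin (n - 1), W n j ω) + w + t * w * W n i ω)
            / ((∑ j : Fin (n - 1), W n j ω) + w + w * W n i ω))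
        - Real.exp ((t - 1) * w)|}
        ⊆ {ω | cn ≤ |(∑ i : Fin (n - 1), W n i) ω - ∫ ω', (∑ i : Fin (n - 1), W n i) ω'|}
          ∪ {ω | ¬ ∀ i : Fin (n - 1), W n i ω ∈ Set.Ioc (0:ℝ) (C n)} := by
      intro ω hω
      by_contra hcon
      rw [Set.mem_union] at hcon
      push_neg at hcon
      obtain ⟨hnb, hnN⟩ := hcon
      rw [Set.mem_setOf_eq, not_le] at hnb
      have hall : ∀ i : Fin (n - 1), W n i ω ∈ Set.Ioc (0:ℝ) (C n) :=
        not_exists_not.mp hnN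
      rw [Set.mem_setOf_eq] at hω
      rw [hEL] at hnb
      have hLsum : (∑ i : Fin (n - 1), W n i) ω = ∑ j : Fin (n - 1), W n j ω :=
        Finset.sum_apply _ _ _
      rw [hLsum] at hnb
      have hLge : cn ≤ ∑ j : Fin (n - 1), W n j ω := by
        have := abs_lt.1 hnb
        rw [hcndef] at this ⊢
        linarith [this.1]
      have hLpos : 0 < ∑ j : Fin (n - 1), W n j ω := lt_of_lt_of_le hcn hLge
      have hδ : w * C n / (∑ j : Fin (n - 1), W n j ω) ≤ δn := by
        rw [hδndef]
        gcongr
      have hdet := det_prod_bound (fun i => W n i ω) hC1 hall hw ht hLpos hδ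
        hδsmall.1 hδsmall.2.1
      have := hδsmall.2.2
      linarith [hω, hdet]
    -- conclude
    calc (volume : Measure Ω) {ω | ε ≤ |(∏ i : Fin (n - 1),
          ((∑ j : Fin (n - 1), W n j ω) + w + t * w * W n i ω)
            / ((∑ j : Fin (n - 1), W n j ω) + w + w * W n i ω))
        - Real.exp ((t - 1) * w)|}
        ≤ (volume : Measure Ω)
            ({ω | cn ≤ |(∑ i : Fin (n - 1), W n i) ω
                - ∫ ω', (∑ i : Fin (n - 1), W n i) ω'|}
              ∪ {ω | ¬ ∀ i : Fin (n - 1), W n i ω ∈ Set.Ioc (0:ℝ) (C n)}) :=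
          measure_mono hsubset
      _ ≤ (volume : Measure Ω) {ω | cn ≤ |(∑ i : Fin (n - 1), W n i) ω
              - ∫ ω', (∑ i : Fin (n - 1), W n i) ω'|}
            + (volume : Measure Ω) {ω | ¬ ∀ i : Fin (n - 1),
                W n i ω ∈ Set.Ioc (0:ℝ) (C n)} := measure_union_le _ _
      _ = (volume : Measure Ω) {ω | cn ≤ |(∑ i : Fin (n - 1), W n i) ω
              - ∫ ω', (∑ i : Fin (n - 1), W n i) ω'|} := by rw [hNnull, add_zero]
      _ ≤ ENNReal.ofReal (variance (∑ i : Fin (n - 1), W n i) volume / cn ^ 2) := hcheb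
      _ ≤ ENNReal.ofReal ((4 / c1) * q n) := ENNReal.ofReal_le_ofReal hfrac
  -- squeeze
  have hupper : Tendsto (fun n => ENNReal.ofReal ((4 / c1) * q n)) atTop (nhds 0) := by
    have h1 : Tendsto (fun n => (4 / c1) * q n) atTop (nhds 0) := by
      have := hq.const_mul (4 / c1)
      rwa [mul_zero] at this
    have := ENNReal.tendsto_ofReal h1
    rwa [ENNReal.ofReal_zero] at this
  refine tendsto_of_tendsto_of_tendsto_of_le_of_le' tendsto_const_nhds hupper ?_ key
  exact Eventually.of_forall (fun n => zero_le)
end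

section
/- Let Q_{1,n}(t;w) = ∑_{i=1}^{n-1} W_{n,i}/(L_n + w + t·w·W_{n,i}) with L_n = ∑_{i=1}^{n-1} W_{n,i}, under the truncated BFRY setup. Then for fixed w > 0 and t ∈ [0,1], Q_{1,n}(t;w) → 1 in probability as n → ∞. -/
open MeasureTheory ProbabilityTheory Real Set Filter Finset
open scoped Topology


lemma detA {m : ℕ} (v : Fin m → ℝ) (Cn w t ε : ℝ) (hCn : 0 < Cn) (hw : 0 < w)
    (ht0 : 0 ≤ t) (ht1 : t ≤ 1) (hε : 0 < ε) (hv : ∀ i, v i ∈ Ioc 0 Cn)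
    (h : ε ≤ |(∑ i, v i / ((∑ j, v j) + w + t * w * v i)) - 1|) :
    (∑ j, v j) ≤ w * (1 + Cn) / ε := by
  set L := ∑ j, v j with hL
  have hL0 : 0 ≤ L := Finset.sum_nonneg fun i _ => (hv i).1.le
  set D := w * (1 + Cn) with hD
  have hD0 : 0 < D := mul_pos hw (by linarith)
  set Q := ∑ i, v i / (L + w + t * w * v i) with hQdef
  have hdenom : ∀ i : Fin m, 0 < L + w + t * w * v i := by
    intro i
    have h1 := (hv i).1
    have h2 : 0 ≤ t * w * v i := by positivity
    linarith
  have hub : Q ≤ L / (L + w) := by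
    rw [hQdef, hL, Finset.sum_div]
    apply Finset.sum_le_sum
    intro i _
    have h1 := (hv i).1
    have hnn : 0 ≤ t * w * v i := by positivity
    exact div_le_div_of_nonneg_left h1.le (by linarith) (by linarith)
  have hQ1 : Q ≤ 1 := hub.trans (div_le_one_of_le₀ (by linarith) (by linarith))
  have hlb : L / (L + D) ≤ Q := by
    rw [hQdef, hL, Finset.sum_div]
    apply Finset.sum_le_sum
    intro i _
    have h1 := (hv i).1
    have h2 := (hv i).2
    have a1 : t * (w * v i) ≤ 1 * (w * v i) :=
      mul_le_mul_of_nonneg_right ht1 (by positivity)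
    have a2 : w * v i ≤ w * Cn := mul_le_mul_of_nonneg_left h2 hw.le
    have hnn : t * w * v i ≤ w * Cn := by nlinarith
    exact div_le_div_of_nonneg_left h1.le (hdenom i) (by rw [hD]; nlinarith)
  have habs : |Q - 1| = 1 - Q := by
    rw [abs_of_nonpos (by linarith), neg_sub]
  rw [habs] at h
  have hLD : 0 < L + D := by linarith
  have h3 : 1 - L / (L + D) = D / (L + D) := by field_simp; ring
  have h2 : ε ≤ D / (L + D) := by rw [← h3]; linarith
  have h4 : ε * (L + D) ≤ D := by
    have := (le_div_iff₀ hLD).1 h2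
    linarith
  rw [le_div_iff₀ hε]
  nlinarith [mul_pos hε hD0]


lemma rpow_sub_one_mul {u : ℝ} (hu : 0 < u) (a : ℝ) : u ^ (a - 1) * u = u ^ a := by
  rw [← Real.rpow_add_one hu.ne' (a - 1)]; norm_num

lemma bfry_integrableOn {α : ℝ} (hα1 : α < 1) {Cn : ℝ} (hCn : 0 < Cn) :
    IntegrableOn (fun u : ℝ => u ^ (-α - 1) * (1 - Real.exp (-u))) (Ioc 0 Cn) := by
  have hg : IntegrableOn (fun u : ℝ => u ^ (-α)) (Ioc (0:ℝ) Cn) := by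
    have h := intervalIntegral.intervalIntegrable_rpow' (a := (0:ℝ)) (b := Cn) (r := -α)
      (by linarith)
    rwa [intervalIntegrable_iff_integrableOn_Ioc_of_le hCn.le] at h
  refine Integrable.mono hg ?_ ?_
  · exact (Measurable.aestronglyMeasurable (by fun_prop))
  · filter_upwards [ae_restrict_mem measurableSet_Ioc] with u hu
    have hu0 : 0 < u := hu.1
    have he1 : Real.exp (-u) ≤ 1 := Real.exp_le_one_iff.2 (by linarith)
    have he2 : 1 - Real.exp (-u) ≤ u := by nlinarith [Real.add_one_le_exp (-u)]
    have hp : (0:ℝ) ≤ u ^ (-α - 1) := Real.rpow_nonneg hu0.le _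
    rw [Real.norm_eq_abs, Real.norm_eq_abs, abs_of_nonneg (by nlinarith),
      abs_of_nonneg (Real.rpow_nonneg hu0.le _)]
    calc u ^ (-α - 1) * (1 - Real.exp (-u)) ≤ u ^ (-α - 1) * u := by nlinarith
      _ = u ^ (-α) := by
          have := rpow_sub_one_mul hu0 (-α)
          rw [show -α - 1 = (-α) - 1 by ring]; exact this

lemma bfryZ_pos {α : ℝ} (hα0 : 0 < α) (hα1 : α < 1) {Cn : ℝ} (h2 : 2 ≤ Cn) :
    0 < ∫ u in Ioc (0:ℝ) Cn, u ^ (-α - 1) * (1 - Real.exp (-u)) := by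
  have hC0 : (0:ℝ) < Cn := by linarith
  have hint := bfry_integrableOn hα1 hC0
  have hnn : 0 ≤ᵐ[volume.restrict (Ioc (0:ℝ) Cn)]
      fun u : ℝ => u ^ (-α - 1) * (1 - Real.exp (-u)) := by
    filter_upwards [ae_restrict_mem measurableSet_Ioc] with u hu
    simp only [Pi.zero_apply]
    have := Real.exp_le_one_iff.2 (by linarith [hu.1] : -u ≤ 0)
    have := Real.rpow_nonneg hu.1.le (-α - 1)
    nlinarith
  have hsub : Ioc (1:ℝ) 2 ⊆ Ioc (0:ℝ) Cn := Ioc_subset_Ioc (by norm_num) h2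
  have hstep : ∫ u in Ioc (1:ℝ) 2, u ^ (-α - 1) * (1 - Real.exp (-u)) ≤
      ∫ u in Ioc (0:ℝ) Cn, u ^ (-α - 1) * (1 - Real.exp (-u)) :=
    setIntegral_mono_set hint hnn (HasSubset.Subset.eventuallyLE hsub)
  refine lt_of_lt_of_le ?_ hstep
  have hconst : ∀ u ∈ Ioc (1:ℝ) 2,
      (2:ℝ) ^ (-α - 1) * (1 - Real.exp (-1)) ≤ u ^ (-α - 1) * (1 - Real.exp (-u)) := by
    intro u hu
    have hu0 : (0:ℝ) < u := by linarith [hu.1]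
    have h1 : (2:ℝ) ^ (-α - 1) ≤ u ^ (-α - 1) :=
      Real.rpow_le_rpow_of_nonpos hu0 hu.2 (by linarith)
    have h2' : Real.exp (-u) ≤ Real.exp (-1) := Real.exp_le_exp.2 (by linarith [hu.1])
    have h3 : (0:ℝ) < 1 - Real.exp (-1) := by
      have : Real.exp (-1) < 1 := Real.exp_lt_one_iff.2 (by norm_num)
      linarith
    have := Real.rpow_nonneg hu0.le (-α - 1)
    nlinarith
  have hge := setIntegral_ge_of_const_le (μ := volume) measurableSet_Ioc
    (by rw [Real.volume_Ioc]; exact ENNReal.ofReal_ne_top) hconst (hint.mono_set hsub)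
  have hvol : (volume (Ioc (1:ℝ) 2)).toReal = 1 := by
    rw [Real.volume_Ioc]; norm_num
  change (volume (Ioc (1:ℝ) 2)).toReal • _ ≤ _ at hge
  rw [hvol, one_smul] at hge
  refine lt_of_lt_of_le ?_ hge
  have : Real.exp (-1) < 1 := Real.exp_lt_one_iff.2 (by norm_num)
  have : (0:ℝ) < (2:ℝ) ^ (-α - 1) := Real.rpow_pos_of_pos (by norm_num) _
  nlinarith

lemma bfryZ_le {α : ℝ} (hα0 : 0 < α) (hα1 : α < 1) {Cn : ℝ} (h2 : 1 ≤ Cn) :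
    (∫ u in Ioc (0:ℝ) Cn, u ^ (-α - 1) * (1 - Real.exp (-u))) ≤ (1 - α)⁻¹ + α⁻¹ := by
  have hC0 : (0:ℝ) < Cn := by linarith
  have hint := bfry_integrableOn hα1 hC0
  have hsplit : Ioc (0:ℝ) Cn = Ioc (0:ℝ) 1 ∪ Ioc (1:ℝ) Cn :=
    (Ioc_union_Ioc_eq_Ioc zero_le_one h2).symm
  have hsub1 : Ioc (0:ℝ) 1 ⊆ Ioc (0:ℝ) Cn := Ioc_subset_Ioc le_rfl h2
  have hsub2 : Ioc (1:ℝ) Cn ⊆ Ioc (0:ℝ) Cn := Ioc_subset_Ioc (by norm_num) le_rfl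
  rw [hsplit, setIntegral_union (Set.Ioc_disjoint_Ioc_of_le le_rfl) measurableSet_Ioc
    (hint.mono_set hsub1) (hint.mono_set hsub2)]
  have b1 : ∫ u in Ioc (0:ℝ) 1, u ^ (-α - 1) * (1 - Real.exp (-u)) ≤ (1 - α)⁻¹ := by
    have hg : IntegrableOn (fun u : ℝ => u ^ (-α)) (Ioc (0:ℝ) 1) := by
      have h := intervalIntegral.intervalIntegrable_rpow' (a := (0:ℝ)) (b := 1) (r := -α)
        (by linarith)
      rwa [intervalIntegrable_iff_integrableOn_Ioc_of_le zero_le_one] at h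
    have hmono : ∫ u in Ioc (0:ℝ) 1, u ^ (-α - 1) * (1 - Real.exp (-u)) ≤
        ∫ u in Ioc (0:ℝ) 1, u ^ (-α) := by
      refine setIntegral_mono_on (hint.mono_set hsub1) hg measurableSet_Ioc ?_
      intro u hu
      have hu0 : 0 < u := hu.1
      have he1 : Real.exp (-u) ≤ 1 := Real.exp_le_one_iff.2 (by linarith)
      have he2 : 1 - Real.exp (-u) ≤ u := by nlinarith [Real.add_one_le_exp (-u)]
      have hp : (0:ℝ) ≤ u ^ (-α - 1) := Real.rpow_nonneg hu0.le _
      calc u ^ (-α - 1) * (1 - Real.exp (-u)) ≤ u ^ (-α - 1) * u := by nlinarith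
        _ = u ^ (-α) := by
            have := rpow_sub_one_mul hu0 (-α)
            rw [show -α - 1 = (-α) - 1 by ring]; exact this
    refine hmono.trans ?_
    rw [← intervalIntegral.integral_of_le zero_le_one,
      integral_rpow (Or.inl (by linarith : (-1:ℝ) < -α))]
    rw [Real.one_rpow, Real.zero_rpow (by linarith : -α + 1 ≠ 0)]
    rw [show -α + 1 = 1 - α by ring]
    norm_num [one_div]
  have b2 : ∫ u in Ioc (1:ℝ) Cn, u ^ (-α - 1) * (1 - Real.exp (-u)) ≤ α⁻¹ := by
    have hg : IntegrableOn (fun u : ℝ => u ^ (-α - 1)) (Ioc (1:ℝ) Cn) := by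
      have h0 : (0:ℝ) ∉ Set.uIcc (1:ℝ) Cn := by
        rw [Set.uIcc_of_le h2]; intro hh; exact absurd hh.1 (by norm_num)
      have h := intervalIntegral.intervalIntegrable_rpow (μ := volume) (a := (1:ℝ)) (b := Cn)
        (r := -α - 1) (Or.inr h0)
      rwa [intervalIntegrable_iff_integrableOn_Ioc_of_le h2] at h
    have hmono : ∫ u in Ioc (1:ℝ) Cn, u ^ (-α - 1) * (1 - Real.exp (-u)) ≤
        ∫ u in Ioc (1:ℝ) Cn, u ^ (-α - 1) := by
      refine setIntegral_mono_on (hint.mono_set hsub2) hg measurableSet_Ioc ?_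
      intro u hu
      have hu0 : 0 < u := by linarith [hu.1]
      have he1 : 0 < Real.exp (-u) := Real.exp_pos _
      have hp : (0:ℝ) ≤ u ^ (-α - 1) := Real.rpow_nonneg hu0.le _
      nlinarith
    refine hmono.trans ?_
    rw [← intervalIntegral.integral_of_le h2,
      integral_rpow (Or.inr ⟨by intro hh; apply hα0.ne'; linarith, by
        rw [Set.uIcc_of_le h2]; intro hh; exact absurd hh.1 (by norm_num)⟩)]
    rw [Real.one_rpow, show -α - 1 + 1 = -α by ring]
    have hCn : (0:ℝ) ≤ Cn ^ (-α) := Real.rpow_nonneg hC0.le _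
    rw [div_le_iff_of_neg (by linarith : -α < 0)]
    have : α⁻¹ * α = 1 := inv_mul_cancel₀ (ne_of_gt hα0)
    nlinarith
  linarith

noncomputable def bfryC (α : ℝ) : ℝ := (1 - Real.exp (-1)) / (2 * ((1 - α)⁻¹ + α⁻¹))

noncomputable def bfryK (α : ℝ) : ℝ := (1 - Real.exp (-(2:ℝ)⁻¹)) * bfryC α

lemma bfryC_pos {α : ℝ} (hα0 : 0 < α) (hα1 : α < 1) : 0 < bfryC α := by
  have h1 : Real.exp (-1) < 1 := Real.exp_lt_one_iff.2 (by norm_num)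
  have h2 : (0:ℝ) < (1 - α)⁻¹ := inv_pos.2 (by linarith)
  have h3 : (0:ℝ) < α⁻¹ := inv_pos.2 hα0
  exact div_pos (by linarith) (by linarith)

lemma bfryK_pos {α : ℝ} (hα0 : 0 < α) (hα1 : α < 1) : 0 < bfryK α := by
  have h1 : Real.exp (-(2:ℝ)⁻¹) < 1 := Real.exp_lt_one_iff.2 (by norm_num)
  exact mul_pos (by linarith) (bfryC_pos hα0 hα1)

lemma truncBFRY_compl_zero (α Cn : ℝ) : truncBFRY α Cn ((Ioc (0:ℝ) Cn)ᶜ) = 0 := by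
  rw [truncBFRY, withDensity_apply _ measurableSet_Ioc.compl]
  rw [setLIntegral_congr_fun measurableSet_Ioc.compl
    (fun x hx => by
      rw [Set.indicator_of_notMem (fun hmem => hx hmem), ENNReal.ofReal_zero])]
  simp

lemma truncBFRY_Icc_ge {α : ℝ} (hα0 : 0 < α) (hα1 : α < 1) {Cn : ℝ} (h2 : 2 ≤ Cn) :
    ENNReal.ofReal (bfryC α * Cn ^ (-α)) ≤ truncBFRY α Cn (Icc (Cn/2) Cn) := by
  have hC0 : (0:ℝ) < Cn := by linarith
  set Z := ∫ u in Ioc (0:ℝ) Cn, u ^ (-α - 1) * (1 - Real.exp (-u)) with hZ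
  have hZpos : 0 < Z := bfryZ_pos hα0 hα1 h2
  have hZle : Z ≤ (1 - α)⁻¹ + α⁻¹ := bfryZ_le hα0 hα1 (by linarith)
  have hsub : Icc (Cn/2) Cn ⊆ Ioc (0:ℝ) Cn := fun x hx => ⟨by linarith [hx.1], hx.2⟩
  set m : ℝ := Z⁻¹ * Cn ^ (-α - 1) * (1 - Real.exp (-1)) with hm
  have hexp1 : Real.exp (-1) < 1 := Real.exp_lt_one_iff.2 (by norm_num)
  have hm0 : 0 ≤ m :=
    mul_nonneg (mul_nonneg (inv_nonneg.2 hZpos.le) (Real.rpow_nonneg hC0.le _)) (by linarith)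
  rw [truncBFRY, withDensity_apply _ measurableSet_Icc]
  have hpt : ∀ x ∈ Icc (Cn/2) Cn, ENNReal.ofReal m ≤ ENNReal.ofReal
      (Set.indicator (Ioc (0:ℝ) Cn)
        (fun w => Z⁻¹ * w ^ (-α - 1) * (1 - Real.exp (-w))) x) := by
    intro x hx
    rw [Set.indicator_of_mem (hsub hx)]
    apply ENNReal.ofReal_le_ofReal
    have hx0 : 0 < x := by linarith [hx.1]
    have hx1 : (1:ℝ) ≤ x := by linarith [hx.1]
    have h1 : Cn ^ (-α - 1) ≤ x ^ (-α - 1) :=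
      Real.rpow_le_rpow_of_nonpos hx0 hx.2 (by linarith)
    have h2' : Real.exp (-x) ≤ Real.exp (-1) := Real.exp_le_exp.2 (by linarith)
    rw [hm]
    gcongr <;> first
      | exact inv_nonneg.2 hZpos.le
      | exact h1
      | exact Real.rpow_nonneg hC0.le _
      | exact Real.rpow_nonneg hx0.le _
      | linarith
  calc ENNReal.ofReal (bfryC α * Cn ^ (-α)) ≤ ENNReal.ofReal (m * (Cn / 2)) := by
        apply ENNReal.ofReal_le_ofReal
        have hCa : (0:ℝ) ≤ Cn ^ (-α) := Real.rpow_nonneg hC0.le _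
        have hkey : m * (Cn / 2) = Z⁻¹ * (1 - Real.exp (-1)) / 2 * Cn ^ (-α) := by
          rw [hm]
          have : Cn ^ (-α - 1) * Cn = Cn ^ (-α) := by
            have := rpow_sub_one_mul hC0 (-α)
            rw [show -α - 1 = (-α) - 1 by ring]; exact this
          field_simp
          nlinarith [this]
        rw [hkey]
        apply mul_le_mul_of_nonneg_right _ hCa
        have h2Z : ((1 - α)⁻¹ + α⁻¹)⁻¹ ≤ Z⁻¹ := inv_anti₀ hZpos hZle
        have heq : bfryC α = (1 - Real.exp (-1)) / 2 * ((1 - α)⁻¹ + α⁻¹)⁻¹ := by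
          rw [bfryC, div_mul_eq_div_div, div_eq_mul_inv]
        rw [heq, show Z⁻¹ * (1 - Real.exp (-1)) / 2 =
          (1 - Real.exp (-1)) / 2 * Z⁻¹ by ring]
        exact mul_le_mul_of_nonneg_left h2Z (by linarith)
      _ ≤ ∫⁻ x in Icc (Cn/2) Cn, ENNReal.ofReal
          (Set.indicator (Ioc (0:ℝ) Cn)
            (fun w => Z⁻¹ * w ^ (-α - 1) * (1 - Real.exp (-w))) x) := by
        have h1 : ENNReal.ofReal (m * (Cn / 2)) =
            ENNReal.ofReal m * volume (Icc (Cn/2) Cn) := by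
          rw [Real.volume_Icc, show Cn - Cn/2 = Cn/2 by ring,
            ENNReal.ofReal_mul hm0]
        rw [h1, ← setLIntegral_const]
        exact setLIntegral_mono' measurableSet_Icc hpt

lemma ae_mem_Ioc_of_law {Ω : Type*} [MeasureSpace Ω] {α Cn : ℝ} (X : Ω → ℝ)
    (hX : Measurable X) (hlaw : Measure.map X volume = truncBFRY α Cn) :
    ∀ᵐ ω, X ω ∈ Ioc (0:ℝ) Cn := by
  have h0 : (volume : Measure Ω) (X ⁻¹' (Ioc (0:ℝ) Cn)ᶜ) = 0 := by
    rw [← Measure.map_apply hX measurableSet_Ioc.compl, hlaw, truncBFRY_compl_zero]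
  rw [ae_iff]
  convert h0 using 2
  rfl

lemma exp_mul_integrable {Ω : Type*} [MeasureSpace Ω]
    [IsProbabilityMeasure (volume : Measure Ω)] (Y : Ω → ℝ) (hY : Measurable Y)
    (hpos : ∀ᵐ ω, 0 ≤ Y ω) {s : ℝ} (hs : s ≤ 0) :
    Integrable (fun ω => Real.exp (s * Y ω)) := by
  refine Integrable.mono' (integrable_const 1)
    ((hY.const_mul s).exp.aestronglyMeasurable) ?_
  filter_upwards [hpos] with ω h0
  rw [Real.norm_eq_abs, abs_of_nonneg (Real.exp_nonneg _)]
  exact Real.exp_le_one_iff.2 (mul_nonpos_of_nonpos_of_nonneg hs h0)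

lemma mgf_le_of_law {Ω : Type*} [MeasureSpace Ω]
    [IsProbabilityMeasure (volume : Measure Ω)] {α : ℝ} (hα0 : 0 < α) (hα1 : α < 1)
    {Cn : ℝ} (h2 : 2 ≤ Cn) (X : Ω → ℝ) (hX : Measurable X)
    (hlaw : Measure.map X volume = truncBFRY α Cn) :
    mgf X volume (-Cn⁻¹) ≤ 1 - bfryK α * Cn ^ (-α) := by
  have hC0 : (0:ℝ) < Cn := by linarith
  have hae := ae_mem_Ioc_of_law X hX hlaw
  set s : ℝ := -Cn⁻¹ with hs
  have hs0 : s ≤ 0 := neg_nonpos.2 (inv_nonneg.2 hC0.le)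
  have hint : Integrable (fun ω => Real.exp (s * X ω)) :=
    exp_mul_integrable X hX (hae.mono fun ω h => h.1.le) hs0
  have hc1 : (0:ℝ) < 1 - Real.exp (-(2:ℝ)⁻¹) := by
    have : Real.exp (-(2:ℝ)⁻¹) < 1 := Real.exp_lt_one_iff.2 (by norm_num)
    linarith
  have hint2 : Integrable (fun ω => 1 - Real.exp (s * X ω)) :=
    (integrable_const 1).sub hint
  have hnn : 0 ≤ᵐ[volume] fun ω => 1 - Real.exp (s * X ω) := by
    filter_upwards [hae] with ω h
    have : s * X ω ≤ 0 := mul_nonpos_of_nonpos_of_nonneg hs0 h.1.le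
    have := Real.exp_le_one_iff.2 this
    simp only [Pi.zero_apply]
    linarith
  have hmarkov := mul_meas_ge_le_integral_of_nonneg hnn hint2
    (1 - Real.exp (-(2:ℝ)⁻¹))
  have hsubset : {ω | X ω ∈ Icc (Cn/2) Cn} ⊆
      {ω | 1 - Real.exp (-(2:ℝ)⁻¹) ≤ 1 - Real.exp (s * X ω)} := by
    intro ω hω
    have h1 : Cn / 2 ≤ X ω := hω.1
    have h2' : s * X ω ≤ -(2:ℝ)⁻¹ := by
      rw [hs]
      have hXpos : 0 < X ω := by linarith [hω.1]
      rw [neg_mul, neg_le_neg_iff]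
      have hmm := mul_le_mul_of_nonneg_left h1 (inv_nonneg.2 hC0.le)
      have hCC : Cn⁻¹ * (Cn / 2) = 2⁻¹ := by field_simp
      linarith [hCC ▸ hmm]
    have := Real.exp_le_exp.2 h2'
    simp only [Set.mem_setOf_eq]
    linarith
  have hmeasge : bfryC α * Cn ^ (-α) ≤
      ((volume : Measure Ω) {ω | X ω ∈ Icc (Cn/2) Cn}).toReal := by
    have hpre : {ω | X ω ∈ Icc (Cn/2) Cn} = X ⁻¹' Icc (Cn/2) Cn := rfl
    have h1 := truncBFRY_Icc_ge hα0 hα1 h2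
    rw [← hlaw, Measure.map_apply hX measurableSet_Icc] at h1
    have h3 : (ENNReal.ofReal (bfryC α * Cn ^ (-α))).toReal ≤
        ((volume : Measure Ω) (X ⁻¹' Icc (Cn/2) Cn)).toReal :=
      ENNReal.toReal_mono (measure_ne_top _ _) h1
    rwa [ENNReal.toReal_ofReal (mul_nonneg (bfryC_pos hα0 hα1).le
      (Real.rpow_nonneg hC0.le _)), ← hpre] at h3
  have hchain : (1 - Real.exp (-(2:ℝ)⁻¹)) * (bfryC α * Cn ^ (-α)) ≤
      ∫ ω, (1 - Real.exp (s * X ω)) := by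
    refine le_trans ?_ hmarkov
    have hmono : ((volume : Measure Ω) {ω | X ω ∈ Icc (Cn/2) Cn}).toReal ≤
        (volume : Measure Ω).real {ω | 1 - Real.exp (-(2:ℝ)⁻¹) ≤
          1 - Real.exp (s * X ω)} :=
      ENNReal.toReal_mono (measure_ne_top _ _) (measure_mono hsubset)
    nlinarith [hmeasge]
  have hsub2 : ∫ ω, (1 - Real.exp (s * X ω)) = 1 - mgf X volume s := by
    rw [integral_sub (integrable_const 1) hint, integral_const, probReal_univ]
    simp [mgf]
  rw [hsub2] at hchain
  have : bfryK α * Cn ^ (-α) = (1 - Real.exp (-(2:ℝ)⁻¹)) * (bfryC α * Cn ^ (-α)) := by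
    rw [bfryK]; ring
  linarith [this ▸ hchain]

/-- Under the truncated BFRY setup, for fixed `w > 0` and `t ∈ [0,1]`,
`Q_{1,n}(t;w) = ∑ᵢ W_{n,i}/(L_n + w + t·w·W_{n,i})` converges to `1` in
probability as `n → ∞`. -/
theorem Q_one_tendsto_one_in_probability (α : ℝ) (hα0 : 0 < α) (hα1 : α < 1)
    (C : ℕ → ℝ) (hCpos : ∀ n, 0 < C n)
    (hC : Tendsto C atTop atTop)
    (hCn : Tendsto (fun n => C n ^ α / (n : ℝ)) atTop (nhds 0))
    {Ω : Type*} [MeasureSpace Ω] [IsProbabilityMeasure (volume : Measure Ω)]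
    (W : (n : ℕ) → Fin (n - 1) → Ω → ℝ)
    (hmeas : ∀ n i, Measurable (W n i))
    (hindep : ∀ n, iIndepFun (W n) volume)
    (hlaw : ∀ n i, Measure.map (W n i) volume = truncBFRY α (C n))
    (w : ℝ) (hw : 0 < w) (t : ℝ) (ht : t ∈ Icc (0:ℝ) 1) :
    ∀ ε > 0,
      Tendsto (fun n : ℕ => (volume : Measure Ω)
          {ω | ε ≤ |(∑ i : Fin (n - 1),
              W n i ω / ((∑ j : Fin (n - 1), W n j ω) + w + t * w * W n i ω)) - 1|})
        atTop (nhds 0) := by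
  intro ε hε
  set κ := bfryK α with hκdef
  have hκ : 0 < κ := bfryK_pos hα0 hα1
  have hev2 : ∀ᶠ n : ℕ in atTop, 2 ≤ C n := hC.eventually_ge_atTop 2
  have hCα : Tendsto (fun n : ℕ => (C n) ^ (-α)) atTop (𝓝 0) :=
    (tendsto_rpow_neg_atTop hα0).comp hC
  have hev3 : ∀ᶠ n : ℕ in atTop, κ * (C n) ^ (-α) < 1 := by
    have h := hCα.const_mul κ
    rw [mul_zero] at h
    exact h.eventually_lt_const (by norm_num)
  have hev4 : ∀ᶠ n : ℕ in atTop, 1 ≤ n := eventually_ge_atTop 1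
  -- per-n quantitative bound
  have key : ∀ n : ℕ, 2 ≤ C n → κ * (C n) ^ (-α) < 1 → 1 ≤ n →
      ((volume : Measure Ω) {ω | ε ≤ |(∑ i : Fin (n - 1),
          W n i ω / ((∑ j : Fin (n - 1), W n j ω) + w + t * w * W n i ω)) - 1|}).toReal ≤
        Real.exp (2 * w / ε) * Real.exp (-(((n:ℝ) - 1) * (κ * (C n) ^ (-α)))) := by
    intro n h2 hδ1 hn1
    have hC0 : (0:ℝ) < C n := hCpos n
    set L : Ω → ℝ := fun ω => ∑ j : Fin (n-1), W n j ω with hLdef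
    have hLmeas : Measurable L := Finset.measurable_sum _ (fun i _ => hmeas n i)
    set a : ℝ := w * (1 + C n) / ε with hadef
    have haeAll : ∀ᵐ ω, ∀ i : Fin (n-1), W n i ω ∈ Ioc (0:ℝ) (C n) :=
      (ae_all_iff).2 fun i => ae_mem_Ioc_of_law (W n i) (hmeas n i) (hlaw n i)
    have hincl : (volume : Measure Ω) {ω | ε ≤ |(∑ i : Fin (n - 1),
          W n i ω / ((∑ j : Fin (n - 1), W n j ω) + w + t * w * W n i ω)) - 1|} ≤
        (volume : Measure Ω) {ω | L ω ≤ a} := by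
      have hGnull : (volume : Measure Ω)
          {ω | ¬ ∀ i : Fin (n-1), W n i ω ∈ Ioc (0:ℝ) (C n)} = 0 := by
        rw [← ae_iff] at *
        exact haeAll
      have hsubset : {ω | ε ≤ |(∑ i : Fin (n - 1),
          W n i ω / ((∑ j : Fin (n - 1), W n j ω) + w + t * w * W n i ω)) - 1|} ⊆
          {ω | L ω ≤ a} ∪ {ω | ¬ ∀ i : Fin (n-1), W n i ω ∈ Ioc (0:ℝ) (C n)} := by
        intro ω hω
        by_cases hg : ∀ i : Fin (n-1), W n i ω ∈ Ioc (0:ℝ) (C n)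
        · exact Or.inl (Set.mem_setOf.2
            (detA (fun i => W n i ω) (C n) w t ε hC0 hw ht.1 ht.2 hε hg hω))
        · exact Or.inr hg
      calc (volume : Measure Ω) {ω | ε ≤ |(∑ i : Fin (n - 1),
              W n i ω / ((∑ j : Fin (n - 1), W n j ω) + w + t * w * W n i ω)) - 1|}
          ≤ (volume : Measure Ω) ({ω | L ω ≤ a} ∪
              {ω | ¬ ∀ i : Fin (n-1), W n i ω ∈ Ioc (0:ℝ) (C n)}) := measure_mono hsubset
        _ ≤ (volume : Measure Ω) {ω | L ω ≤ a} +
              (volume : Measure Ω) {ω | ¬ ∀ i : Fin (n-1), W n i ω ∈ Ioc (0:ℝ) (C n)} :=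
            measure_union_le _ _
        _ = (volume : Measure Ω) {ω | L ω ≤ a} := by rw [hGnull, add_zero]
    set s : ℝ := -(C n)⁻¹ with hsdef
    have hs0 : s ≤ 0 := neg_nonpos.2 (inv_nonneg.2 hC0.le)
    have haeL : ∀ᵐ ω, 0 ≤ L ω :=
      haeAll.mono fun ω h => Finset.sum_nonneg fun i _ => (h i).1.le
    have hintL : Integrable (fun ω => Real.exp (s * L ω)) :=
      exp_mul_integrable L hLmeas haeL hs0
    have hcher := measure_le_le_exp_mul_mgf (μ := (volume : Measure Ω)) (X := L) a hs0 hintL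
    have hLfun : L = ∑ i : Fin (n-1), W n i := by
      funext ω; rw [hLdef]; simp
    have hmgf : mgf L volume s = ∏ i : Fin (n-1), mgf (W n i) volume s := by
      rw [hLfun]; exact (hindep n).mgf_sum (hmeas n) Finset.univ
    have hbound : ∀ i : Fin (n-1), mgf (W n i) volume s ≤ 1 - κ * (C n) ^ (-α) :=
      fun i => mgf_le_of_law hα0 hα1 h2 (W n i) (hmeas n i) (hlaw n i)
    have hδ0 : (0:ℝ) ≤ 1 - κ * (C n) ^ (-α) := by linarith
    have hprod : mgf L volume s ≤ (1 - κ * (C n) ^ (-α)) ^ (n-1) := by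
      rw [hmgf]
      calc ∏ i : Fin (n-1), mgf (W n i) volume s
          ≤ ∏ _i : Fin (n-1), (1 - κ * (C n) ^ (-α)) :=
            Finset.prod_le_prod (fun i _ => mgf_nonneg) (fun i _ => hbound i)
        _ = (1 - κ * (C n) ^ (-α)) ^ (n-1) := by
            rw [Finset.prod_const, Finset.card_univ, Fintype.card_fin]
    have hpow : (1 - κ * (C n) ^ (-α)) ^ (n-1) ≤
        Real.exp (-(κ * (C n) ^ (-α))) ^ (n-1) :=
      pow_le_pow_left₀ hδ0
        (by nlinarith [Real.add_one_le_exp (-(κ * (C n) ^ (-α)))]) _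
    have hexpa : Real.exp (-s * a) ≤ Real.exp (2 * w / ε) := by
      apply Real.exp_le_exp.2
      have heq : -s * a = w * (1 + C n) / (ε * C n) := by
        rw [hsdef, hadef]; field_simp
      rw [heq, div_le_div_iff₀ (by positivity) hε]
      have hsum : w * (1 + C n) ≤ w * (2 * C n) :=
        mul_le_mul_of_nonneg_left (by linarith) hw.le
      nlinarith [mul_le_mul_of_nonneg_right hsum hε.le]
    calc ((volume : Measure Ω) {ω | ε ≤ |(∑ i : Fin (n - 1),
            W n i ω / ((∑ j : Fin (n - 1), W n j ω) + w + t * w * W n i ω)) - 1|}).toReal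
        ≤ ((volume : Measure Ω) {ω | L ω ≤ a}).toReal :=
          ENNReal.toReal_mono (measure_ne_top _ _) hincl
      _ ≤ Real.exp (-s * a) * mgf L volume s := hcher
      _ ≤ Real.exp (2 * w / ε) * (1 - κ * (C n) ^ (-α)) ^ (n-1) := by
          exact mul_le_mul hexpa hprod mgf_nonneg (Real.exp_nonneg _)
      _ ≤ Real.exp (2 * w / ε) * Real.exp (-(κ * (C n) ^ (-α))) ^ (n-1) :=
          mul_le_mul_of_nonneg_left hpow (Real.exp_nonneg _)
      _ = Real.exp (2 * w / ε) * Real.exp (-(((n:ℝ) - 1) * (κ * (C n) ^ (-α)))) := by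
          rw [← Real.exp_nat_mul]
          congr 1
          rw [Nat.cast_sub hn1]
          push_cast
          ring
  -- the bound tends to zero
  have hBtends : Tendsto (fun n : ℕ =>
      Real.exp (2 * w / ε) * Real.exp (-(((n:ℝ) - 1) * (κ * (C n) ^ (-α)))))
      atTop (𝓝 0) := by
    have hexp : Tendsto (fun n : ℕ => ((n:ℝ) - 1) * (κ * (C n) ^ (-α))) atTop atTop := by
      have hmain : Tendsto (fun n : ℕ => (n:ℝ) * ((C n) ^ α)⁻¹) atTop atTop := by
        have hpos : ∀ᶠ n : ℕ in atTop, (C n) ^ α / (n:ℝ) ∈ Ioi (0:ℝ) := by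
          filter_upwards [eventually_ge_atTop 1] with n hn
          exact div_pos (Real.rpow_pos_of_pos (hCpos n) α)
            (by exact_mod_cast Nat.lt_of_lt_of_le Nat.zero_lt_one hn)
        have h0 : Tendsto (fun n : ℕ => (C n) ^ α / (n:ℝ)) atTop (𝓝[>] 0) :=
          tendsto_nhdsWithin_iff.2 ⟨hCn, hpos⟩
        have h1 := h0.inv_tendsto_nhdsGT_zero
        refine h1.congr fun n => ?_
        simp [Pi.inv_apply, inv_div, div_eq_mul_inv]
      have hCinv : Tendsto (fun n : ℕ => ((C n) ^ α)⁻¹) atTop (𝓝 0) :=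
        tendsto_inv_atTop_zero.comp ((tendsto_rpow_atTop hα0).comp hC)
      have hsum : Tendsto
          (fun n : ℕ => (n:ℝ) * ((C n) ^ α)⁻¹ + (-(((C n) ^ α)⁻¹))) atTop atTop :=
        hmain.atTop_add hCinv.neg
      have hsub : Tendsto (fun n : ℕ => ((n:ℝ) - 1) * ((C n) ^ α)⁻¹) atTop atTop :=
        hsum.congr fun n => by ring
      have hfin := hsub.const_mul_atTop hκ
      refine hfin.congr fun n => ?_
      rw [← Real.rpow_neg (hCpos n).le]
      ring
    have h1 : Tendsto (fun n : ℕ => -(((n:ℝ) - 1) * (κ * (C n) ^ (-α)))) atTop atBot :=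
      tendsto_neg_atTop_atBot.comp hexp
    have h2 := Real.tendsto_exp_atBot.comp h1
    have h3 := h2.const_mul (Real.exp (2 * w / ε))
    rw [mul_zero] at h3
    exact h3
  have htoReal : Tendsto (fun n : ℕ => ((volume : Measure Ω) {ω | ε ≤ |(∑ i : Fin (n - 1),
      W n i ω / ((∑ j : Fin (n - 1), W n j ω) + w + t * w * W n i ω)) - 1|}).toReal)
      atTop (𝓝 0) := by
    refine tendsto_of_tendsto_of_tendsto_of_le_of_le' tendsto_const_nhds hBtends ?_ ?_
    · exact Eventually.of_forall fun n => ENNReal.toReal_nonneg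
    · filter_upwards [hev2, hev3, hev4] with n h2 h3 h4
      exact key n h2 h3 h4
  have hfinal := (ENNReal.continuous_ofReal.tendsto 0).comp htoReal
  rw [ENNReal.ofReal_zero] at hfinal
  refine hfinal.congr fun n => ?_
  exact ENNReal.ofReal_toReal (measure_ne_top _ _)
end
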